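/- arXiv:2501.18053 — 10 statements merged into one kernel-verified Lean document; each statement's English description precedes it below -/
import Mathlib

section
/- Let A be a commutative idempotent semiring and C a prime congruence on A. Then for any a, b ∈ A, either (a+b, a) ∈ C or (a+b, b) ∈ C; in particular the quotient A/C is totally ordered by the addition-induced order. -/
/-- The tropical semifield `𝕋 = (ℝ ∪ {-∞}, max, +)`, realized as
`Tropical (WithTop (OrderDual ℝ))`: tropical addition is `max` and tropical
multiplication is ordinary addition of reals, `0 = -∞`. -/
abbrev T : Type := Tropical (WithTop (OrderDual ℝ))

/-- The tropical Laurent polynomial semiring `T[x₁^{±1},…,x_n^{±1}]`. -/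
abbrev TLaur (n : ℕ) : Type := AddMonoidAlgebra T (Fin n → ℤ)

/-- The tropical polynomial semiring `T[x₁,…,x_n]`. -/
abbrev TPoly (n : ℕ) : Type := AddMonoidAlgebra T (Fin n → ℕ)

/-- View an element of a monomial-algebra over `T` as a finitely supported function. -/
def toF {G : Type} (f : AddMonoidAlgebra T G) : G →₀ T := f.coeff

/-- The twisted product of pairs over a commutative semiring. -/
def tw {R : Type*} [CommSemiring R] (α β : R × R) : R × R :=
  (α.1 * β.1 + α.2 * β.2, α.1 * β.2 + α.2 * β.1)

/-- A congruence is prime if it is proper and whenever the twisted product of two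
pairs lies in it, one of the pairs lies in it. -/
def IsPrimeCon {R : Type*} [CommSemiring R] (C : RingCon R) : Prop :=
  (∃ a b : R, ¬ C a b) ∧
    ∀ α β : R × R, C (tw α β).1 (tw α β).2 → C α.1 α.2 ∨ C β.1 β.2

/-- For a prime congruence `C`, for all `a b` either `(a+b, a) ∈ C` or `(a+b, b) ∈ C`;
in particular the quotient is totally ordered by the addition-induced order. -/
theorem prime_con_totallyOrdered {A : Type*} [CommSemiring A] (hidem : ∀ a : A, a + a = a)
    (C : RingCon A) (hC : IsPrimeCon C) :
    (∀ a b : A, C (a + b) a ∨ C (a + b) b) ∧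
      (∀ x y : C.Quotient, x + y = y ∨ x + y = x) := by
  have hnat : ∀ n : ℕ, ((n + 1 : ℕ) : A) = 1 := by
    intro n
    induction n with
    | zero => simp
    | succ k ih =>
        push_cast at ih ⊢
        rw [add_assoc, hidem, ih]
  have key : ∀ a b : A, C (a + b) a ∨ C (a + b) b := by
    intro a b
    have h := hC.2 (a + b, a) (a + b, b) ?_
    · exact h
    · simp only [tw]
      have heq : (a + b) * (a + b) + a * b = (a + b) * b + a * (a + b) := by
        ring_nf
        have h3 : (3 : A) = 1 := by
          rw [show (3 : A) = ((2 + 1 : ℕ) : A) by norm_num, hnat]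
        have h2 : (2 : A) = 1 := by
          rw [show (2 : A) = ((1 + 1 : ℕ) : A) by norm_num, hnat]
        rw [h3, h2]
      rw [heq]
      exact C.refl _
  refine ⟨key, ?_⟩
  intro x y
  induction x using Quotient.inductionOn' with
  | h a =>
  induction y using Quotient.inductionOn' with
  | h b =>
  rcases key a b with h | h
  · right
    exact Quotient.sound' h
  · left
    exact Quotient.sound' h
end

section
/- Let A be a commutative idempotent semiring in which every element is a sum of invertible elements, and let P ⊆ Q be congruences on A. If P is prime, then Q is prime (when Q is proper). -/
/-- If every element of `A` is a sum of units, `P ≤ Q` are congruences with `Q` proper,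
and `P` is prime, then `Q` is prime. -/
theorem prime_le_prime {A : Type*} [CommSemiring A] (hidem : ∀ a : A, a + a = a)
    (hsum : ∀ a : A, ∃ s : Multiset A, (∀ x ∈ s, IsUnit x) ∧ s.sum = a)
    (P Q : RingCon A) (hPQ : P ≤ Q) (hQ : ∃ a b : A, ¬ Q a b) (hP : IsPrimeCon P) :
    IsPrimeCon Q := by
  -- totality of the P-order
  have htot : ∀ x y : A, P (x + y) x ∨ P (x + y) y := by
    intro x y
    have he : (x + y) * (x + y) + x * y = (x + y) * y + x * (x + y) := by
      have h1 : (x + y) * (x + y) + x * y = x * x + (x * y + x * y + x * y) + y * y := by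
        ring
      have h2 : (x + y) * y + x * (x + y) = x * x + (x * y + x * y) + y * y := by ring
      rw [h1, h2, hidem, hidem]
    exact hP.2 (x + y, x) (x + y, y) (by simp only [tw]; rw [he]; exact P.refl _)
  -- every element is P-equivalent to 0 or to a unit
  have hunit : ∀ a : A, P a 0 ∨ ∃ u : A, IsUnit u ∧ P a u := by
    intro a
    obtain ⟨s, hs, rfl⟩ := hsum a
    induction s using Multiset.induction with
    | empty => left; simpa using P.refl (0 : A)
    | cons x s ih =>
      have hx : IsUnit x := hs x (by simp)
      have ih' := ih fun y hy => hs y (by simp [hy])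
      rw [Multiset.sum_cons]
      rcases ih' with h0 | ⟨u, hu, hpu⟩
      · right
        refine ⟨x, hx, ?_⟩
        have := P.add (P.refl x) h0
        simpa using this
      · right
        have h1 : P (x + s.sum) (x + u) := P.add (P.refl x) hpu
        rcases htot x u with h2 | h2
        · exact ⟨x, hx, P.trans h1 h2⟩
        · exact ⟨u, hu, P.trans h1 h2⟩
  -- key lemma (WLOG-ordered case)
  have key : ∀ a₁ a₂ b₁ b₂ : A, P (a₁ + a₂) a₁ → P (b₁ + b₂) b₁ →
      Q (a₁ * b₁ + a₂ * b₂) (a₁ * b₂ + a₂ * b₁) → Q a₁ a₂ ∨ Q b₁ b₂ := by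
    intro a₁ a₂ b₁ b₂ ha hb h
    have hexp : P ((a₁ + a₂) * (b₁ + b₂)) (a₁ * b₁) := P.mul ha hb
    have e1 : (a₁ + a₂) * (b₁ + b₂) + a₂ * b₂ = (a₁ + a₂) * (b₁ + b₂) := by
      have h1 : (a₁ + a₂) * (b₁ + b₂) + a₂ * b₂
          = a₁ * b₁ + a₁ * b₂ + a₂ * b₁ + (a₂ * b₂ + a₂ * b₂) := by ring
      rw [h1, hidem]; ring
    have s1 : P (a₁ * b₁ + a₂ * b₂) (a₁ * b₁) := by
      have h2 := P.add hexp (P.refl (a₂ * b₂))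
      rw [e1] at h2
      exact P.trans (P.symm h2) hexp
    have hQ1 : Q (a₁ * b₁) (a₁ * b₂ + a₂ * b₁) := Q.trans (Q.symm (hPQ s1)) h
    rcases hunit a₁ with ha0 | ⟨u, hu, hau⟩
    · left
      have h1 : P (a₁ + a₂) (0 + a₂) := P.add ha0 (P.refl a₂)
      rw [zero_add] at h1
      exact hPQ (P.trans ha0 (P.symm (P.trans (P.trans (P.symm h1) ha) ha0)))
    rcases hunit b₁ with hb0 | ⟨v, hv, hbv⟩
    · right
      have h1 : P (b₁ + b₂) (0 + b₂) := P.add hb0 (P.refl b₂)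
      rw [zero_add] at h1
      exact hPQ (P.trans hb0 (P.symm (P.trans (P.trans (P.symm h1) hb) hb0)))
    obtain ⟨u', hu'⟩ := hu.exists_right_inv
    obtain ⟨v', hv'⟩ := hv.exists_right_inv
    have p1 : P (a₁ * b₁) (u * v) := P.mul hau hbv
    have p2 : P (a₁ * b₂ + a₂ * b₁) (u * b₂ + a₂ * v) :=
      P.add (P.mul hau (P.refl b₂)) (P.mul (P.refl a₂) hbv)
    have hQ2 : Q (u * v) (u * b₂ + a₂ * v) := Q.trans (Q.trans (Q.symm (hPQ p1)) hQ1) (hPQ p2)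
    have hQ3 : Q ((u * v) * (u' * v')) ((u * b₂ + a₂ * v) * (u' * v')) :=
      Q.mul hQ2 (Q.refl _)
    have eL : (u * v) * (u' * v') = 1 := by
      rw [show (u * v) * (u' * v') = (u * u') * (v * v') by ring, hu', hv', mul_one]
    have eR : (u * b₂ + a₂ * v) * (u' * v') = b₂ * v' + a₂ * u' := by
      rw [show (u * b₂ + a₂ * v) * (u' * v')
          = (u * u') * (b₂ * v') + (v * v') * (a₂ * u') by ring, hu', hv', one_mul, one_mul]
    rw [eL, eR] at hQ3
    rcases htot (b₂ * v') (a₂ * u') with h4 | h4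
    · right
      have h5 : Q 1 (b₂ * v') := Q.trans hQ3 (hPQ h4)
      have h6 : Q (1 * v) ((b₂ * v') * v) := Q.mul h5 (Q.refl v)
      rw [one_mul, show (b₂ * v') * v = b₂ * (v * v') by ring, hv', mul_one] at h6
      exact Q.trans (hPQ hbv) h6
    · left
      have h5 : Q 1 (a₂ * u') := Q.trans hQ3 (hPQ h4)
      have h6 : Q (1 * u) ((a₂ * u') * u) := Q.mul h5 (Q.refl u)
      rw [one_mul, show (a₂ * u') * u = a₂ * (u * u') by ring, hu', mul_one] at h6
      exact Q.trans (hPQ hau) h6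
  refine ⟨hQ, ?_⟩
  rintro ⟨a₁, a₂⟩ ⟨b₁, b₂⟩ h
  simp only [tw] at h
  rcases htot a₁ a₂ with ha | ha <;> rcases htot b₁ b₂ with hb | hb
  · exact key a₁ a₂ b₁ b₂ ha hb h
  · have hb' : P (b₂ + b₁) b₂ := by rwa [add_comm] at hb
    have h' : Q (a₁ * b₂ + a₂ * b₁) (a₁ * b₁ + a₂ * b₂) := Q.symm h
    rcases key a₁ a₂ b₂ b₁ ha hb' h' with h1 | h1
    · exact Or.inl h1
    · exact Or.inr (Q.symm h1)
  · have ha' : P (a₂ + a₁) a₂ := by rwa [add_comm] at ha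
    have h' : Q (a₂ * b₁ + a₁ * b₂) (a₂ * b₂ + a₁ * b₁) := by
      rw [show a₂ * b₁ + a₁ * b₂ = a₁ * b₂ + a₂ * b₁ by ring,
        show a₂ * b₂ + a₁ * b₁ = a₁ * b₁ + a₂ * b₂ by ring]
      exact Q.symm h
    rcases key a₂ a₁ b₁ b₂ ha' hb h' with h1 | h1
    · exact Or.inl (Q.symm h1)
    · exact Or.inr h1
  · have ha' : P (a₂ + a₁) a₂ := by rwa [add_comm] at ha
    have hb' : P (b₂ + b₁) b₂ := by rwa [add_comm] at hb
    have h' : Q (a₂ * b₂ + a₁ * b₁) (a₂ * b₁ + a₁ * b₂) := by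
      rw [show a₂ * b₂ + a₁ * b₁ = a₁ * b₁ + a₂ * b₂ by ring,
        show a₂ * b₁ + a₁ * b₂ = a₁ * b₂ + a₂ * b₁ by ring]
      exact h
    rcases key a₂ a₁ b₂ b₁ ha' hb' h' with h1 | h1
    · exact Or.inl (Q.symm h1)
    · exact Or.inr (Q.symm h1)
end

section
/- Let A be a commutative idempotent semiring in which every element is a sum of invertible elements, and C a proper congruence on A. If the quotient A/C is totally ordered by the addition-induced order, then A/C is a semifield (every nonzero element is invertible) and C is a prime congruence. -/
/-- Key cancellation lemma in a totally ordered idempotent semiring whose nonzero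
elements are units. -/
lemma key_lemma {Q : Type*} [CommSemiring Q]
    (hunit : ∀ x : Q, x ≠ 0 → IsUnit x)
    (htot : ∀ x y : Q, x + y = y ∨ x + y = x)
    (x y u v : Q) (hxy : x + y = y) (huv : u + v = v)
    (heq : x*u + y*v = x*v + y*u) : x = y ∨ u = v := by
  have hvv : v + v = v := by rcases htot v v with h | h <;> exact h
  have h1 : x*u + y*v = y*v := by
    have := congrArg (· + y*v) heq
    simp only [add_assoc] at this
    calc x*u + y*v = x*u + (y*v + y*v) := by rw [← mul_add, hvv]
      _ = x*v + (y*u + y*v) := this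
      _ = x*v + y*(u+v) := by rw [mul_add]
      _ = x*v + y*v := by rw [huv]
      _ = (x+y)*v := by rw [add_mul]
      _ = y*v := by rw [hxy]
  have h2 : y*v = x*v + y*u := by rw [← heq, h1]
  rcases htot (x*v) (y*u) with h | h
  · have h3 : y*v = y*u := by rw [h2, h]
    by_cases hy : y = 0
    · left
      have : x = 0 := by rw [hy, add_zero] at hxy; exact hxy
      rw [this, hy]
    · right
      exact (hunit y hy).mul_left_cancel h3.symm
  · have h3 : y*v = x*v := by rw [h2, h]
    by_cases hv : v = 0
    · right
      have : u = 0 := by rw [hv, add_zero] at huv; exact huv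
      rw [this, hv]
    · left
      exact ((hunit v hv).mul_right_cancel h3).symm

/-- In a totally ordered additive situation, a multiset with nonzero sum attains
its sum at one of its elements. -/
lemma sum_mem_of_ne_zero {Q : Type*} [CommSemiring Q]
    (htot : ∀ x y : Q, x + y = y ∨ x + y = x)
    (t : Multiset Q) (h : t.sum ≠ 0) : ∃ z ∈ t, t.sum = z := by
  induction t using Multiset.induction_on with
  | empty => simp at h
  | cons a t ih =>
    rw [Multiset.sum_cons] at h ⊢
    rcases htot a t.sum with h' | h'
    · rw [h'] at h ⊢
      obtain ⟨z, hz, hz'⟩ := ih h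
      exact ⟨z, Multiset.mem_cons_of_mem hz, hz'⟩
    · exact ⟨a, Multiset.mem_cons_self a t, h'⟩

/-- If every element of `A` is a sum of units, `C` is a proper congruence, and the
quotient `A/C` is totally ordered by the addition-induced order, then `A/C` is a
semifield (every nonzero element is a unit) and `C` is prime. -/
theorem totallyOrdered_quotient_semifield_prime {A : Type*} [CommSemiring A]
    (hidem : ∀ a : A, a + a = a)
    (hsum : ∀ a : A, ∃ s : Multiset A, (∀ x ∈ s, IsUnit x) ∧ s.sum = a)
    (C : RingCon A) (hproper : ∃ a b : A, ¬ C a b)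
    (htot : ∀ x y : C.Quotient, x + y = y ∨ x + y = x) :
    (∀ x : C.Quotient, x ≠ 0 → IsUnit x) ∧ IsPrimeCon C := by
  have hunit : ∀ x : C.Quotient, x ≠ 0 → IsUnit x := by
    intro x hx
    induction x using Quotient.inductionOn' with
    | h a =>
      obtain ⟨s, hs, rfl⟩ := hsum a
      have hmap : (Quotient.mk'' s.sum : C.Quotient) = (s.map (C.mk' : A →+* C.Quotient)).sum := by
        rw [← map_multiset_sum]; rfl
      rw [hmap] at hx ⊢
      obtain ⟨z, hz, hz'⟩ := sum_mem_of_ne_zero htot _ hx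
      rw [hz']
      obtain ⟨u, hu, rfl⟩ := Multiset.mem_map.mp hz
      exact (hs u hu).map _
  refine ⟨hunit, hproper, ?_⟩
  intro α β h
  have heq : ((α.1 : C.Quotient)) * β.1 + (α.2 : C.Quotient) * β.2
      = (α.1 : C.Quotient) * β.2 + (α.2 : C.Quotient) * β.1 := by
    have := C.eq.mpr h
    simpa only [tw, RingCon.coe_add, RingCon.coe_mul] using this
  set x := (α.1 : C.Quotient)
  set y := (α.2 : C.Quotient)
  set u := (β.1 : C.Quotient)
  set v := (β.2 : C.Quotient)
  rw [← C.eq, ← C.eq]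
  show x = y ∨ u = v
  rcases htot x y with hxy | hxy <;> rcases htot u v with huv | huv
  · exact key_lemma hunit htot x y u v hxy huv heq
  · have huv' : v + u = u := by rwa [add_comm]
    exact (key_lemma hunit htot x y v u hxy huv' heq.symm).imp id Eq.symm
  · have hxy' : y + x = x := by rwa [add_comm]
    have heq' : y*u + x*v = y*v + x*u := by
      rw [add_comm (y*u), add_comm (y*v)]; exact heq.symm
    exact (key_lemma hunit htot y x u v hxy' huv heq').imp Eq.symm id
  · have hxy' : y + x = x := by rwa [add_comm]
    have huv' : v + u = u := by rwa [add_comm]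
    have heq' : y*v + x*u = y*u + x*v := by
      rw [add_comm (y*v), add_comm (y*u)]; exact heq
    exact (key_lemma hunit htot y x v u hxy' huv' heq').imp Eq.symm Eq.symm
end

section
/- Let C be a congruence on the tropical Laurent polynomial semiring T[x₁^{±1},…,x_n^{±1}]. Then the set I = { f : bend(f) ⊆ C } of Laurent polynomials all of whose bend relations lie in C is an ideal of the semiring. -/
/-- All bend relations of `f` (the pairs `(f, f with its i-th term deleted)`,
for `i` in the support of `f`) lie in the congruence `C`. -/
def bendIn {G : Type} [AddCommMonoid G] (C : RingCon (AddMonoidAlgebra T G))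
    (f : AddMonoidAlgebra T G) : Prop :=
  ∀ i ∈ (toF f).support, C f (AddMonoidAlgebra.ofCoeff (Finsupp.erase i (toF f)))

/-- `Bend I`: the congruence generated by the bend relations of all elements of `I`. -/
noncomputable def Bend {G : Type} [AddCommMonoid G] (I : Set (AddMonoidAlgebra T G)) :
    RingCon (AddMonoidAlgebra T G) :=
  ringConGen (fun f g => f ∈ I ∧ ∃ i ∈ (toF f).support, g = AddMonoidAlgebra.ofCoeff (Finsupp.erase i (toF f)))

def ofF {G : Type} (f : G →₀ T) : AddMonoidAlgebra T G := AddMonoidAlgebra.ofCoeff f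

lemma erase_single_mul {n : ℕ} (j : Fin n → ℤ) (c : T) (f : TLaur n) (i : Fin n → ℤ) :
    Finsupp.erase i (toF (AddMonoidAlgebra.single j c * f))
      = toF (AddMonoidAlgebra.single j c * ofF (Finsupp.erase (i - j) (toF f))) := by
  ext m
  rw [Finsupp.erase_apply]
  have h1 := AddMonoidAlgebra.coeff_single_mul_apply (ofF (Finsupp.erase (i - j) (toF f))) c j m
  have h2 := AddMonoidAlgebra.coeff_single_mul_apply f c j m
  rw [show toF (AddMonoidAlgebra.single j c * ofF (Finsupp.erase (i - j) (toF f))) m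
        = c * (Finsupp.erase (i - j) (toF f)) (-j + m) from h1]
  rcases eq_or_ne m i with h | h
  · rw [if_pos h, h, show -j + i = i - j by abel, Finsupp.erase_same, mul_zero]
  · rw [if_neg h, Finsupp.erase_ne (by
      intro hc
      apply h
      rw [sub_eq_neg_add] at hc
      exact add_left_cancel hc)]
    exact h2

lemma eraseO_add {n : ℕ} (i : Fin n → ℤ) (x y : TLaur n) :
    ofF (Finsupp.erase i (toF (x + y)))
      = ofF (Finsupp.erase i (toF x)) + ofF (Finsupp.erase i (toF y)) :=
  (congrArg ofF (Finsupp.erase_add i (toF x) (toF y))).trans rfl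

lemma bend_all {n : ℕ} (C : RingCon (TLaur n)) (f : TLaur n)
    (hf : bendIn C f) (i : Fin n → ℤ) : C f (ofF (Finsupp.erase i (toF f))) := by
  by_cases h : i ∈ (toF f).support
  · exact hf i h
  · rw [show ofF (Finsupp.erase i (toF f)) = f from
      congrArg ofF (Finsupp.erase_of_notMem_support h)]
    exact C.refl f

lemma mul_bend {n : ℕ} (C : RingCon (TLaur n)) (r f : TLaur n)
    (hf : ∀ k : Fin n → ℤ, C f (ofF (Finsupp.erase k (toF f)))) :
    ∀ i : Fin n → ℤ, C (r * f) (ofF (Finsupp.erase i (toF (r * f)))) := by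
  refine Finsupp.induction (motive := fun r' : (Fin n → ℤ) →₀ T =>
      ∀ i, C (ofF r' * f) (ofF (Finsupp.erase i (toF (ofF r' * f))))) (toF r) ?_ ?_
  · intro i
    have h0 : (ofF (0 : (Fin n → ℤ) →₀ T)) * f = 0 := zero_mul f
    rw [h0]
    rw [show ofF (Finsupp.erase i (toF (0 : TLaur n))) = 0 from
      congrArg ofF (Finsupp.erase_zero i)]
    exact C.refl 0
  · intro a b g _ _ ih i
    have e1 : ofF (Finsupp.single a b + g) * f
        = AddMonoidAlgebra.single a b * f + ofF g * f := add_mul _ _ f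
    rw [e1, eraseO_add]
    refine C.add ?_ (ih i)
    rw [show ofF (Finsupp.erase i (toF (AddMonoidAlgebra.single a b * f)))
        = AddMonoidAlgebra.single a b * ofF (Finsupp.erase (i - a) (toF f)) from
      congrArg ofF (erase_single_mul a b f i)]
    exact C.mul (C.refl (AddMonoidAlgebra.single a b)) (hf (i - a))

/-- For any congruence `C` on the tropical Laurent polynomial semiring, the set of
Laurent polynomials all of whose bend relations lie in `C` is an ideal. -/
theorem bendIn_isIdeal {n : ℕ} (C : RingCon (TLaur n)) :
    ∃ J : Ideal (TLaur n), (J : Set (TLaur n)) = {f : TLaur n | bendIn C f} := by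
  refine ⟨{ carrier := {f : TLaur n | bendIn C f}
            add_mem' := ?_
            zero_mem' := ?_
            smul_mem' := ?_ }, rfl⟩
  · intro f g hf hg i _
    have := C.add (bend_all C f hf i) (bend_all C g hg i)
    rwa [← eraseO_add] at this
  · intro i hi
    simp [toF] at hi
  · intro c x hx
    rw [smul_eq_mul]
    intro i _
    exact mul_bend C c x (bend_all C x hx) i
end

section
/- The intersection of two closed ideals of the tropical (Laurent) polynomial semiring is a closed ideal, where an ideal I is closed if I equals the set of all polynomials whose bend relations lie in the congruence generated by the bend relations of elements of I. -/
lemma Bend_mono {G : Type} [AddCommMonoid G] {I J : Set (AddMonoidAlgebra T G)}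
    (h : I ⊆ J) : Bend I ≤ Bend J :=
  RingCon.ringConGen_le.mpr fun f g hfg =>
    RingConGen.Rel.of _ _ ⟨h hfg.1, hfg.2⟩

/-- An ideal is closed if it consists exactly of the polynomials all of whose bend
relations lie in the congruence generated by the bend relations of its elements. -/
def IsClosedIdeal {n : ℕ} (I : Ideal (TPoly n)) : Prop :=
  ∀ f : TPoly n, bendIn (Bend (I : Set (TPoly n))) f ↔ f ∈ I

/-- The intersection of two closed ideals is a closed ideal. -/
theorem inf_closed_ideals {n : ℕ} (I J : Ideal (TPoly n))
    (hI : IsClosedIdeal I) (hJ : IsClosedIdeal J) : IsClosedIdeal (I ⊓ J) := by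
  intro f
  constructor
  · intro hf
    have hIJ_I : (↑(I ⊓ J) : Set (TPoly n)) ⊆ (I : Set (TPoly n)) := fun x hx => hx.1
    have hIJ_J : (↑(I ⊓ J) : Set (TPoly n)) ⊆ (J : Set (TPoly n)) := fun x hx => hx.2
    constructor
    · exact (hI f).mp (fun i hi => Bend_mono hIJ_I (hf i hi))
    · exact (hJ f).mp (fun i hi => Bend_mono hIJ_J (hf i hi))
  · intro hf i hi
    exact RingConGen.Rel.of _ _ ⟨hf, i, hi, rfl⟩
end

section
/- If P is a prime congruence on the tropical Laurent polynomial semiring T[x₁^{±1},…,x_n^{±1}], then the ideal |P| = { f : bend(f) ⊆ P } is a prime ideal. -/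
namespace BendAux

lemma T_one_ne_zero : (1 : T) ≠ 0 := by
  intro h
  have h2 := congrArg Tropical.untrop h
  rw [Tropical.untrop_zero, Tropical.untrop_one] at h2
  exact (WithTop.coe_ne_top (a := (0 : OrderDual ℝ))) h2

variable {n : ℕ}

/-- Erase, with types stated on the algebra side. -/
noncomputable abbrev er (i : Fin n → ℤ) (f : TLaur n) : TLaur n :=
  AddMonoidAlgebra.ofCoeff (Finsupp.erase i (toF f))

lemma coeff_er (i : Fin n → ℤ) (f : TLaur n) : (er i f).coeff = Finsupp.erase i f.coeff := rfl

lemma addIdem (f : TLaur n) : f + f = f :=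
  AddMonoidAlgebra.ext (Finsupp.ext fun _ => Tropical.add_self _)

lemma single_add_self (a : Fin n → ℤ) (h : TLaur n) :
    AddMonoidAlgebra.single a (h.coeff a) + h = h :=
  AddMonoidAlgebra.ext <| Finsupp.ext fun y => by
    rw [AddMonoidAlgebra.coeff_add, AddMonoidAlgebra.coeff_single]
    rcases eq_or_ne y a with rfl | hy
    · rw [Finsupp.add_apply, Finsupp.single_eq_same]; exact Tropical.add_self _
    · rw [Finsupp.add_apply, Finsupp.single_apply, if_neg (Ne.symm hy), zero_add]

lemma erase_add_self (a : Fin n → ℤ) (h : TLaur n) : er a h + h = h :=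
  AddMonoidAlgebra.ext <| Finsupp.ext fun y => by
    rw [AddMonoidAlgebra.coeff_add, coeff_er]
    rcases eq_or_ne y a with rfl | hy
    · rw [Finsupp.add_apply, Finsupp.erase_same, zero_add]
    · rw [Finsupp.add_apply, Finsupp.erase_ne hy]; exact Tropical.add_self _

lemma erase_single_mul (a i : Fin n → ℤ) (b : T) (f : TLaur n) :
    er (a + i) (AddMonoidAlgebra.single a b * f)
      = AddMonoidAlgebra.single a b * er i f := by
  refine AddMonoidAlgebra.ext (Finsupp.ext fun y => ?_)
  simp only [coeff_er, AddMonoidAlgebra.coeff_single_mul_apply]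
  rcases eq_or_ne y (a + i) with rfl | hy
  · rw [Finsupp.erase_same, neg_add_cancel_left,
      Finsupp.erase_same, mul_zero]
  · have hy2 : (-a + y) ≠ i := fun h => hy (by rw [← h, add_neg_cancel_left])
    rw [Finsupp.erase_ne hy, toF, AddMonoidAlgebra.coeff_single_mul_apply,
      Finsupp.erase_ne hy2]
    rfl

section
variable (P : RingCon (TLaur n))

/-- The canonical preorder induced by `P`. -/
def le (a b : TLaur n) : Prop := P (a + b) b

variable {P}

lemma le_of_eq {a b : TLaur n} (h : a + b = b) : le P a b := by
  show P (a + b) b; rw [h]; exact P.refl b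

lemma le_congr_right {a b b' : TLaur n} (h : le P a b) (hb : P b b') : le P a b' :=
  P.trans (P.trans (P.add (P.refl a) (P.symm hb)) h) hb

lemma le_trans {a b c : TLaur n} (h1 : le P a b) (h2 : le P b c) : le P a c := by
  have s1 : P (a + c) (a + (b + c)) := P.add (P.refl a) (P.symm h2)
  have s2 : P (a + (b + c)) ((a + b) + c) := by rw [add_assoc]; exact P.refl _
  have s3 : P ((a + b) + c) (b + c) := P.add h1 (P.refl c)
  exact P.trans (P.trans (P.trans s1 s2) s3) h2

lemma le_mul_right {a b c : TLaur n} (h : le P a b) : le P (a * c) (b * c) := by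
  have h2 : P ((a + b) * c) (b * c) := P.mul h (P.refl c)
  show P (a * c + b * c) (b * c)
  rwa [add_mul] at h2

lemma le_mul_left {a b c : TLaur n} (h : le P a b) : le P (c * a) (c * b) := by
  have h2 : P (c * (a + b)) (c * b) := P.mul (P.refl c) h
  show P (c * a + c * b) (c * b)
  rwa [mul_add] at h2

variable (hP : IsPrimeCon P)
include hP

lemma le_total (a b : TLaur n) : le P a b ∨ le P b a := by
  have key : (tw (a + b, b) (a + b, a)).1 = (tw (a + b, b) (a + b, a)).2 := by
    show (a + b) * (a + b) + b * a = (a + b) * a + b * (a + b)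
    have habs : a * b + (a * b + (a * a + b * b)) = a * b + (a * a + b * b) := by
      rw [← add_assoc (a * b) (a * b), addIdem]
    calc (a + b) * (a + b) + b * a
        = a * b + (a * b + (a * b + (a * a + b * b))) := by ring
      _ = a * b + (a * b + (a * a + b * b)) := congrArg (a * b + ·) habs
      _ = (a + b) * a + b * (a + b) := by ring
  rcases hP.2 (a + b, b) (a + b, a) (by rw [key]; exact P.refl _) with h | h
  · exact Or.inl h
  · exact Or.inr (show P (b + a) a by rwa [add_comm])

lemma cancel {a b c : TLaur n} (h : P (a * c) (b * c)) : P a b ∨ P c 0 := by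
  have h2 : P (tw (a, b) (c, 0)).1 (tw (a, b) (c, 0)).2 := by
    show P (a * c + b * 0) (a * 0 + b * c)
    rwa [mul_zero, mul_zero, add_zero, zero_add]
  exact hP.2 (a, b) (c, 0) h2

end

section
variable {P : RingCon (TLaur n)}

lemma bendIn_zero : bendIn P (0 : TLaur n) := by
  intro i hi
  simp [toF] at hi

lemma bendIn_add {f g : TLaur n} (hf : bendIn P f) (hg : bendIn P g) :
    bendIn P (f + g) := by
  intro i _
  have h1 : P f (AddMonoidAlgebra.ofCoeff (Finsupp.erase i (toF f))) := by
    by_cases h : i ∈ (toF f).support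
    · exact hf i h
    · have e : Finsupp.erase i (toF f) = toF f := Finsupp.erase_of_notMem_support h
      rw [e]; exact P.refl f
  have h2 : P g (AddMonoidAlgebra.ofCoeff (Finsupp.erase i (toF g))) := by
    by_cases h : i ∈ (toF g).support
    · exact hg i h
    · have e : Finsupp.erase i (toF g) = toF g := Finsupp.erase_of_notMem_support h
      rw [e]; exact P.refl g
  have e : Finsupp.erase i (toF (f + g)) = Finsupp.erase i (toF f) + Finsupp.erase i (toF g) :=
    Finsupp.erase_add i (toF f) (toF g)
  rw [e, AddMonoidAlgebra.ofCoeff_add]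
  exact P.add h1 h2

lemma bendIn_single_mul {a : Fin n → ℤ} {b : T} {f : TLaur n} (hf : bendIn P f) :
    bendIn P (AddMonoidAlgebra.single a b * f) := by
  intro j hj
  have hj' : toF (AddMonoidAlgebra.single a b * f) j ≠ 0 := Finsupp.mem_support_iff.mp hj
  have happ : toF (AddMonoidAlgebra.single a b * f) j = b * f.coeff (-a + j) :=
    AddMonoidAlgebra.coeff_single_mul_apply f b a j
  have hfj : f.coeff (-a + j) ≠ 0 := fun h0 => hj' (by rw [happ, h0, mul_zero])
  have hbend : P f (er (-a + j) f) := hf _ (Finsupp.mem_support_iff.mpr hfj)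
  have key : AddMonoidAlgebra.ofCoeff (Finsupp.erase j (toF (AddMonoidAlgebra.single a b * f)))
      = AddMonoidAlgebra.single a b * er (-a + j) f := by
    have h0 := erase_single_mul a (-a + j) b f
    rwa [add_neg_cancel_left] at h0
  rw [key]
  exact P.mul (P.refl _) hbend

lemma bendIn_mul {c f : TLaur n} (hf : bendIn P f) : bendIn P (c * f) := by
  induction c using AddMonoidAlgebra.induction with
  | zero => rw [zero_mul]; exact bendIn_zero
  | single_add a b c' _ _ ih =>
    have e : (AddMonoidAlgebra.single a b + (id c' : TLaur n)) * f
        = AddMonoidAlgebra.single a b * f + (id c' : TLaur n) * f := add_mul _ _ _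
    show bendIn P ((AddMonoidAlgebra.single a b + (id c' : TLaur n)) * f)
    rw [e]
    exact bendIn_add (bendIn_single_mul hf) ih

end

end BendAux


open BendAux

/-- If `P` is a prime congruence on the tropical Laurent polynomial semiring, then
`|P| = { f : bend(f) ⊆ P }` is a prime ideal. -/
theorem bendIn_prime_ideal {n : ℕ} (P : RingCon (TLaur n)) (hP : IsPrimeCon P) :
    ∃ J : Ideal (TLaur n), (J : Set (TLaur n)) = {f : TLaur n | bendIn P f} ∧
      J.IsPrime := by
  refine ⟨{ carrier := {f : TLaur n | bendIn P f}
            add_mem' := fun hf hg => bendIn_add hf hg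
            zero_mem' := bendIn_zero
            smul_mem' := fun c f hf => by
              simpa only [smul_eq_mul, Set.mem_setOf_eq] using bendIn_mul (c := c) hf }, rfl, ?_⟩
  constructor
  · -- J ≠ ⊤
    rw [Ideal.ne_top_iff_one]
    intro hb
    have hb' : bendIn P (1 : TLaur n) := hb
    have h0 : (0 : Fin n → ℤ) ∈ (toF (1 : TLaur n)).support := by
      rw [Finsupp.mem_support_iff]
      have e : toF (1 : TLaur n) 0 = (1 : T) := Finsupp.single_eq_same
      rw [e]; exact T_one_ne_zero
    have h10 := hb' 0 h0
    have e : Finsupp.erase (0 : Fin n → ℤ) (toF (1 : TLaur n)) = 0 := Finsupp.erase_single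
    rw [e, AddMonoidAlgebra.ofCoeff_zero] at h10
    obtain ⟨x, y, hxy⟩ := hP.1
    apply hxy
    have hx : P x 0 := by
      have hh := P.mul (P.refl x) h10
      rwa [mul_one, mul_zero] at hh
    have hy : P y 0 := by
      have hh := P.mul (P.refl y) h10
      rwa [mul_one, mul_zero] at hh
    exact P.trans hx (P.symm hy)
  · -- primality
    intro f g hmem
    by_contra hc
    push_neg at hc
    obtain ⟨hfJ, hgJ⟩ := hc
    have hf' : ¬ bendIn P f := hfJ
    have hg' : ¬ bendIn P g := hgJ
    simp only [bendIn, not_forall] at hf' hg'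
    obtain ⟨i, hisupp, hi⟩ := hf'
    obtain ⟨k, hksupp, hk⟩ := hg'
    set Mi : TLaur n := AddMonoidAlgebra.single i (f.coeff i) with hMidef
    set Nk : TLaur n := AddMonoidAlgebra.single k (g.coeff k) with hNkdef
    set f' : TLaur n := er i f with hf'def
    set g' : TLaur n := er k g with hg'def
    have hi' : ¬ P f f' := hi
    have hk' : ¬ P g g' := hk
    have hfdec : Mi + f' = f := AddMonoidAlgebra.single_add_erase i f
    have hgdec : Nk + g' = g := AddMonoidAlgebra.single_add_erase k g
    have hPfMi : P f Mi := by
      rcases le_total hP f' Mi with h | h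
      · have e : f' + Mi = f := by rw [add_comm]; exact hfdec
        have h2 : P (f' + Mi) Mi := h
        rwa [e] at h2
      · have h2 : P (Mi + f') f' := h
        rw [hfdec] at h2
        exact absurd h2 hi'
    have hPgNk : P g Nk := by
      rcases le_total hP g' Nk with h | h
      · have e : g' + Nk = g := by rw [add_comm]; exact hgdec
        have h2 : P (g' + Nk) Nk := h
        rwa [e] at h2
      · have h2 : P (Nk + g') g' := h
        rw [hgdec] at h2
        exact absurd h2 hk'
    have hMi0 : ¬ P Mi 0 := by
      intro h0
      have hh : P (Mi + f') ((0 : TLaur n) + f') := P.add h0 (P.refl f')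
      rw [hfdec, zero_add] at hh
      exact hi' hh
    have hNk0 : ¬ P Nk 0 := by
      intro h0
      have hh : P (Nk + g') ((0 : TLaur n) + g') := P.add h0 (P.refl g')
      rw [hgdec, zero_add] at hh
      exact hk' hh
    have hbendfg : bendIn P (f * g) := hmem
    have hbend_r : P (f * g) (er (i + k) (f * g)) := by
      by_cases hr : (i + k) ∈ (toF (f * g)).support
      · exact hbendfg _ hr
      · have e : er (i + k) (f * g) = f * g :=
          congrArg AddMonoidAlgebra.ofCoeff (Finsupp.erase_of_notMem_support hr)
        rw [e]; exact P.refl _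
    have hdecomp : f * g
        = AddMonoidAlgebra.single (i + k) (f.coeff i * g.coeff k) + (Mi * g' + f' * g) := by
      have e1 : Mi * Nk = AddMonoidAlgebra.single (i + k) (f.coeff i * g.coeff k) :=
        AddMonoidAlgebra.single_mul_single _ _ _ _
      calc f * g = (Mi + f') * (Nk + g') := by rw [hfdec, hgdec]
        _ = Mi * Nk + (Mi * g' + f' * (Nk + g')) := by ring
        _ = AddMonoidAlgebra.single (i + k) (f.coeff i * g.coeff k) + (Mi * g' + f' * g) := by
            rw [e1, hgdec]
    have herase : er (i + k) (f * g) = er (i + k) (Mi * g' + f' * g) := by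
      rw [hdecomp]
      rw [show er (i + k) (AddMonoidAlgebra.single (i + k) (f.coeff i * g.coeff k) + (Mi * g' + f' * g))
            = er (i + k) (AddMonoidAlgebra.single (i + k) (f.coeff i * g.coeff k))
              + er (i + k) (Mi * g' + f' * g) from AddMonoidAlgebra.ext (Finsupp.erase_add _ _ _),
        show er (i + k) (AddMonoidAlgebra.single (i + k) (f.coeff i * g.coeff k)) = 0 from
          AddMonoidAlgebra.ext Finsupp.erase_single, zero_add]
    have l1 : le P Mi f := le_of_eq (single_add_self i f)
    have l2 : le P Nk g := le_of_eq (single_add_self k g)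
    have l5 : le P (Mi * Nk) (f * g) := le_trans (le_mul_right l1) (le_mul_left l2)
    have l6 : le P (Mi * Nk) (er (i + k) (f * g)) := le_congr_right l5 hbend_r
    have l7 : le P (er (i + k) (f * g)) (Mi * g' + f' * g) := by
      rw [herase]
      exact le_of_eq (erase_add_self _ _)
    have l8 : le P (Mi * Nk) (Mi * g' + f' * g) := le_trans l6 l7
    have l9 : P (Mi * g' + f' * g) (Mi * g' + f' * Nk) :=
      P.add (P.refl _) (P.mul (P.refl f') hPgNk)
    have l10 : le P (Mi * Nk) (Mi * g' + f' * Nk) := le_congr_right l8 l9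
    rcases le_total hP (f' * Nk) (Mi * g') with hcase | hcase
    · have hD : P (Mi * g' + f' * Nk) (Mi * g') := by
        have h2 : P (f' * Nk + Mi * g') (Mi * g') := hcase
        rwa [add_comm] at h2
      have l11 : P (Mi * Nk + Mi * g') (Mi * g') := le_congr_right l10 hD
      have l12 : P ((Nk + g') * Mi) (g' * Mi) := by
        have e2 : (Nk + g') * Mi = Mi * Nk + Mi * g' := by ring
        have e3 : g' * Mi = Mi * g' := mul_comm _ _
        rw [e2, e3]; exact l11
      rcases cancel hP l12 with hcc | hcc
      · rw [hgdec] at hcc; exact hk' hcc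
      · exact hMi0 hcc
    · have l11 : P (Mi * Nk + f' * Nk) (f' * Nk) := le_congr_right l10 hcase
      have l12 : P ((Mi + f') * Nk) (f' * Nk) := by rw [add_mul]; exact l11
      rcases cancel hP l12 with hcc | hcc
      · rw [hfdec] at hcc; exact hi' hcc
      · exact hNk0 hcc
end

section
/- Every non-zero prime ideal of the tropical Laurent polynomial semiring T[x₁^{±1},…,x_n^{±1}] contains a binomial (a sum of two terms). -/
lemma key {R : Type*} [CommSemiring R] (hid : ∀ x : R, x + x = x) (a b g : R) :
    (a + (b + g)) * (a*b + (a*g + b*g)) = (a+b) * ((a+g) * (b+g)) := by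
  have h2 : ∀ x : R, x * 2 = x := fun x => by rw [mul_two, hid]
  have h3 : ∀ x : R, x * 3 = x := fun x => by
    rw [show (3:R) = 2 + 1 by norm_num, mul_add, h2, mul_one, hid]
  ring_nf
  rw [h2, h3]

lemma T_exists (c : T) (h : c ≠ 0) : ∃ r : OrderDual ℝ, c = Tropical.trop (↑r : WithTop (OrderDual ℝ)) := by
  obtain ⟨r, hr⟩ := WithTop.ne_top_iff_exists.mp
    (show Tropical.untrop c ≠ ⊤ from fun hc => h (by
      rw [show c = Tropical.trop (Tropical.untrop c) from rfl, hc]; rfl))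
  exact ⟨r, by rw [show c = Tropical.trop (Tropical.untrop c) from rfl, ← hr]⟩

lemma T_inv (r : OrderDual ℝ) :
    Tropical.trop (↑(-r) : WithTop (OrderDual ℝ)) * Tropical.trop (↑r : WithTop (OrderDual ℝ)) = 1 := by
  rw [← Tropical.trop_add, ← WithTop.coe_add]
  norm_num

lemma hid_TLaur {n : ℕ} (x : TLaur n) : x + x = x := by
  apply AddMonoidAlgebra.coeff_injective
  apply Finsupp.ext
  intro a
  show toF (x + x) a = toF x a
  rw [show toF (x+x) = toF x + toF x from rfl, Finsupp.add_apply]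
  exact Tropical.add_self _

lemma card_one_case {n : ℕ} (I : Ideal (TLaur n)) (hprime : I.IsPrime)
    (f : TLaur n) (hfI : f ∈ I) (h1 : (toF f).support.card = 1) : False := by
  have h := Finsupp.card_support_eq_one.mp h1
  obtain ⟨u, hc, hf⟩ := h
  obtain ⟨r, hr⟩ := T_exists _ hc
  apply hprime.ne_top
  rw [Ideal.eq_top_iff_one]
  have hmul : (AddMonoidAlgebra.single (-u) (Tropical.trop (↑(-r) : WithTop (OrderDual ℝ))) : TLaur n) * f ∈ I :=
    I.mul_mem_left _ hfI
  have hf' : f = AddMonoidAlgebra.single u (toF f u) := AddMonoidAlgebra.coeff_injective hf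
  rw [hf', hr, AddMonoidAlgebra.single_mul_single, T_inv, neg_add_cancel] at hmul
  exact hmul


/-- Every non-zero prime ideal of the tropical Laurent polynomial semiring contains a
binomial, i.e. a sum of two terms with distinct exponents and nonzero coefficients. -/
theorem prime_ideal_contains_binomial {n : ℕ} (I : Ideal (TLaur n))
    (hprime : I.IsPrime) (hnz : I ≠ ⊥) :
    ∃ (u v : Fin n → ℤ) (c d : T), u ≠ v ∧ c ≠ 0 ∧ d ≠ 0 ∧
      (AddMonoidAlgebra.ofCoeff (Finsupp.single u c + Finsupp.single v d : (Fin n → ℤ) →₀ T) : TLaur n) ∈ I := by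
  obtain ⟨f, hfI, hf0⟩ := (Submodule.ne_bot_iff I).mp hnz
  suffices H : ∀ (k : ℕ) (f : TLaur n), f ∈ I → f ≠ 0 → (toF f).support.card ≤ k →
      ∃ (u v : Fin n → ℤ) (c d : T), u ≠ v ∧ c ≠ 0 ∧ d ≠ 0 ∧
      (AddMonoidAlgebra.ofCoeff (Finsupp.single u c + Finsupp.single v d : (Fin n → ℤ) →₀ T) : TLaur n) ∈ I from
    H _ f hfI hf0 le_rfl
  intro k
  induction k with
  | zero =>
    intro f hfI hf0 hc
    exact absurd (Finsupp.support_eq_empty.mp (Finset.card_eq_zero.mp (Nat.le_zero.mp hc)))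
      (fun h => hf0 (AddMonoidAlgebra.coeff_eq_zero.mp h))
  | succ k ih =>
    intro f hfI hf0 hcard
    set F : (Fin n → ℤ) →₀ T := toF f with hF
    have hFne : F.support.Nonempty := by
      rw [Finsupp.support_nonempty_iff]; exact fun h => hf0 (AddMonoidAlgebra.coeff_eq_zero.mp h)
    obtain ⟨u, hu⟩ := hFne
    have hfu : F u ≠ 0 := Finsupp.mem_support_iff.mp hu
    by_cases h1 : F.support.card = 1
    · exact absurd (card_one_case I hprime f hfI h1) id
    have hge2 : 2 ≤ F.support.card := by
      have h0 : F.support.card ≠ 0 := by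
        intro h
        exact hf0 (AddMonoidAlgebra.coeff_eq_zero.mp (Finsupp.support_eq_empty.mp (Finset.card_eq_zero.mp h)))
      omega
    have hv' : (F.erase u).support.Nonempty := by
      rw [Finsupp.support_erase]
      refine Finset.card_pos.mp ?_
      rw [Finset.card_erase_of_mem hu]
      omega
    obtain ⟨v, hv⟩ := hv'
    have hvu : v ≠ u := by
      rw [Finsupp.support_erase] at hv
      exact Finset.ne_of_mem_erase hv
    have hfv : F v ≠ 0 := by
      have := Finsupp.mem_support_iff.mp hv
      rwa [Finsupp.erase_ne hvu] at this
    set g : (Fin n → ℤ) →₀ T := (F.erase u).erase v with hg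
    have hdec : F = Finsupp.single u (F u) + (Finsupp.single v (F v) + g) := by
      rw [hg, ← Finsupp.erase_ne hvu (f := F), Finsupp.single_add_erase, Finsupp.single_add_erase]
    have hsuppg : g.support = (F.support.erase u).erase v := by
      rw [hg, Finsupp.support_erase, Finsupp.support_erase]
    by_cases hg0 : g = 0
    · refine ⟨u, v, F u, F v, fun h => hvu h.symm, hfu, hfv, ?_⟩
      have heq : f = (AddMonoidAlgebra.ofCoeff (Finsupp.single u (F u) + Finsupp.single v (F v) : (Fin n → ℤ) →₀ T) : TLaur n) := by
        apply AddMonoidAlgebra.coeff_injective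
        show F = Finsupp.single u (F u) + Finsupp.single v (F v)
        conv_lhs => rw [hdec]
        rw [hg0, add_zero]
      rwa [heq] at hfI
    have hvmem : v ∈ F.support.erase u := by rwa [Finsupp.support_erase] at hv
    have hcardg : g.support.card = F.support.card - 2 := by
      rw [hsuppg, Finset.card_erase_of_mem hvmem, Finset.card_erase_of_mem hu]
      omega
    have hfeq : f = (AddMonoidAlgebra.single u (F u) : TLaur n) +
        ((AddMonoidAlgebra.single v (F v) : TLaur n) + (AddMonoidAlgebra.ofCoeff g : TLaur n)) := AddMonoidAlgebra.coeff_injective hdec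
    have hmem : ((AddMonoidAlgebra.single u (F u) : TLaur n) + AddMonoidAlgebra.single v (F v)) *
        (((AddMonoidAlgebra.single u (F u) : TLaur n) + (AddMonoidAlgebra.ofCoeff g : TLaur n)) *
          ((AddMonoidAlgebra.single v (F v) : TLaur n) + (AddMonoidAlgebra.ofCoeff g : TLaur n))) ∈ I := by
      rw [← key hid_TLaur, ← hfeq]
      exact I.mul_mem_right _ hfI
    have step : ∀ (w : Fin n → ℤ) (cw : T), cw ≠ 0 → w ∉ g.support →
        ((AddMonoidAlgebra.single w cw : TLaur n) + (AddMonoidAlgebra.ofCoeff g : TLaur n)) ∈ I →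
        ∃ (u v : Fin n → ℤ) (c d : T), u ≠ v ∧ c ≠ 0 ∧ d ≠ 0 ∧
        (AddMonoidAlgebra.ofCoeff (Finsupp.single u c + Finsupp.single v d : (Fin n → ℤ) →₀ T) : TLaur n) ∈ I := by
      intro w cw hcw hwns hmemI
      apply ih _ hmemI
      · intro h
        have happ : toF ((AddMonoidAlgebra.single w cw : TLaur n) + (AddMonoidAlgebra.ofCoeff g : TLaur n)) w
            = cw := by
          show (Finsupp.single w cw + g) w = cw
          rw [Finsupp.add_apply, Finsupp.single_eq_same, Finsupp.notMem_support_iff.mp hwns,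
            add_zero]
        rw [h] at happ
        exact hcw happ.symm
      · have hsupp : (toF ((AddMonoidAlgebra.single w cw : TLaur n) + (AddMonoidAlgebra.ofCoeff g : TLaur n))).support
            = {w} ∪ g.support := by
          show (Finsupp.single w cw + g).support = _
          rw [Finsupp.support_add_eq, Finsupp.support_single_ne_zero _ hcw]
          rw [Finsupp.support_single_ne_zero _ hcw]
          exact Finset.disjoint_singleton_left.mpr hwns
        rw [hsupp]
        have hle : ({w} ∪ g.support).card ≤ 1 + g.support.card := by
          simpa using Finset.card_union_le {w} g.support
        omega
    rcases hprime.mem_or_mem hmem with hab | hm2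
    · exact ⟨u, v, F u, F v, fun h => hvu h.symm, hfu, hfv, hab⟩
    · have hung : u ∉ g.support := by
        rw [hsuppg]
        intro hmem'
        exact Finset.notMem_erase u F.support (Finset.mem_of_mem_erase hmem')
      have hvng : v ∉ g.support := by
        rw [hsuppg]
        exact Finset.notMem_erase v _
      rcases hprime.mem_or_mem hm2 with h | h
      · exact step u (F u) hfu hung h
      · exact step v (F v) hfv hvng h
end

section
/- If I is a non-zero prime ideal of the tropical Laurent polynomial semiring T[x₁^{±1},…,x_n^{±1}], then Bend(I), the congruence generated by the bend relations of elements of I, is a prime congruence. -/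
/-! ### Auxiliary material -/

open Tropical AddMonoidAlgebra

noncomputable instance instCoeFunTAlg {G : Type} : CoeFun (AddMonoidAlgebra T G) (fun _ => G → T) :=
  ⟨fun f => f.coeff⟩

section Tlemmas

lemma T_add_total (a b : T) : a + b = a ∨ a + b = b := by
  rcases le_total (untrop a) (untrop b) with h | h
  · exact Or.inl (Tropical.add_eq_left h)
  · exact Or.inr (Tropical.add_eq_right h)

lemma T_add_eq_zero {a b : T} (h : a + b = 0) : a = 0 ∧ b = 0 := by
  have := congrArg untrop h
  rw [untrop_add, untrop_zero, min_eq_top] at this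
  exact ⟨untrop_injective (by rw [this.1, untrop_zero]),
    untrop_injective (by rw [this.2, untrop_zero])⟩

lemma T_mul_ne_zero {a b : T} (ha : a ≠ 0) (hb : b ≠ 0) : a * b ≠ 0 := by
  intro h
  have := congrArg untrop h
  rw [untrop_mul, untrop_zero, WithTop.add_eq_top] at this
  rcases this with h' | h'
  · exact ha (untrop_injective (by rw [h', untrop_zero]))
  · exact hb (untrop_injective (by rw [h', untrop_zero]))

lemma T_mul_eq_zero_iff {a b : T} : a * b = 0 ↔ a = 0 ∨ b = 0 := by
  constructor
  · intro h; by_contra hc; push_neg at hc; exact T_mul_ne_zero hc.1 hc.2 h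
  · rintro (rfl | rfl) <;> simp

lemma T_one_ne_zero : (1 : T) ≠ 0 := by
  intro h
  have := congrArg untrop h
  rw [untrop_one, untrop_zero] at this
  exact (WithTop.coe_ne_top (a := (0 : OrderDual ℝ))) this

lemma T_exists_inv {c : T} (h : c ≠ 0) : ∃ d : T, c * d = 1 := by
  have hne : untrop c ≠ ⊤ := fun ht => h (untrop_injective (by rw [ht, untrop_zero]))
  obtain ⟨r, hr⟩ := WithTop.ne_top_iff_exists.mp hne
  refine ⟨trop (↑(-r)), untrop_injective ?_⟩
  rw [untrop_mul, ← hr, untrop_trop, untrop_one]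
  norm_cast
  exact add_neg_cancel r

end Tlemmas

section IdemIdentities

variable {S : Type*} [CommSemiring S]

lemma idem_mul_two (hS : ∀ x : S, x + x = x) (x : S) : x * 2 = x := by
  rw [mul_two, hS]

lemma idem_mul_three (hS : ∀ x : S, x + x = x) (x : S) : x * 3 = x := by
  have h3 : (3 : S) = 2 + 1 := by norm_num
  rw [h3, mul_add, mul_one, idem_mul_two hS, hS]

lemma idem_Id1 (hS : ∀ x : S, x + x = x) (a b h : S) :
    (a+b)*((a+h)*(b+h)) = (a+(b+h))*(a*b+(a*h+b*h)) := by
  have : (a+b)*((a+h)*(b+h)) = (a+b+h)*(a*b+(a*h+b*h)) := by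
    ring_nf
    rw [idem_mul_two hS, idem_mul_three hS]
  rw [this, add_assoc]

lemma idem_Id2 (hS : ∀ x : S, x + x = x) (μ v : S) :
    ((1+μ) + v) * (v*(1+μ) + 1) = (1+μ)*(v*(1+μ) + (1 + v*v)) := by
  ring_nf
  simp only [idem_mul_two hS]

end IdemIdentities

section Rlemmas

variable {n : ℕ}

lemma R_add_apply (f g : TLaur n) (a : Fin n → ℤ) : (f + g) a = f a + g a := rfl

lemma R_add_idem (f : TLaur n) : f + f = f := by
  ext a; exact Tropical.add_self _

lemma R_add_eq_zero {f g : TLaur n} (h : f + g = 0) : f = 0 ∧ g = 0 := by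
  have key : ∀ a, f a = 0 ∧ g a = 0 := by
    intro a
    exact T_add_eq_zero (congrArg (fun x : TLaur n => x a) h)
  exact ⟨AddMonoidAlgebra.ext (Finsupp.ext fun a => (key a).1), AddMonoidAlgebra.ext (Finsupp.ext fun a => (key a).2)⟩

noncomputable def eraseR (a : Fin n → ℤ) (f : TLaur n) : TLaur n :=
  AddMonoidAlgebra.ofCoeff (Finsupp.erase a (toF f))

lemma single_add_eraseR (a : Fin n → ℤ) (f : TLaur n) :
    single a (f a) + eraseR a f = f :=
  congrArg AddMonoidAlgebra.ofCoeff (Finsupp.single_add_erase a (toF f))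

lemma eraseR_add (a : Fin n → ℤ) (f g : TLaur n) :
    eraseR a (f + g) = eraseR a f + eraseR a g :=
  congrArg AddMonoidAlgebra.ofCoeff (Finsupp.erase_add a (toF f) (toF g))

lemma eraseR_single_same (a : Fin n → ℤ) (c : T) :
    eraseR a (single a c) = 0 :=
  congrArg AddMonoidAlgebra.ofCoeff (Finsupp.erase_single : Finsupp.erase a (Finsupp.single a c) = 0)

lemma eraseR_single_ne {a b : Fin n → ℤ} (h : a ≠ b) (c : T) :
    eraseR a (single b c) = single b c :=
  congrArg AddMonoidAlgebra.ofCoeff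
    (Finsupp.erase_single_ne h : Finsupp.erase a (Finsupp.single b c) = Finsupp.single b c)

lemma support_eraseR (a : Fin n → ℤ) (f : TLaur n) :
    (eraseR a f).coeff.support = (f.coeff.support).erase a := Finsupp.support_erase

lemma support_addR {f g : TLaur n}
    (h : Disjoint (f.coeff.support) (g.coeff.support)) :
    (f + g).coeff.support = f.coeff.support ∪ g.coeff.support := Finsupp.support_add_eq h

lemma support_singleR (a : Fin n → ℤ) {c : T} (hc : c ≠ 0) :
    (single a c : TLaur n).coeff.support = {a} := Finsupp.support_single_ne_zero a hc

lemma mem_supportR {f : TLaur n} {a : Fin n → ℤ} : a ∈ f.coeff.support ↔ f a ≠ 0 :=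
  Finsupp.mem_support_iff

lemma unit_pair (a : Fin n → ℤ) {c : T} (hc : c ≠ 0) :
    ∃ u : TLaur n, single a c * u = 1 := by
  obtain ⟨d, hd⟩ := T_exists_inv hc
  refine ⟨single (-a) d, ?_⟩
  rw [single_mul_single, hd]
  rw [show a + -a = 0 by abel, ← AddMonoidAlgebra.one_def]

noncomputable def phi (n : ℕ) : TLaur n →+* T :=
  AddMonoidAlgebra.liftNCRingHom (RingHom.id T) 1 (fun _ _ => mul_comm _ _)

lemma phi_single (a : Fin n → ℤ) (c : T) : phi n (single a c) = c := by
  show AddMonoidAlgebra.liftNC _ _ _ = c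
  rw [AddMonoidAlgebra.liftNC_single]
  simp

lemma phi_ne_zero {f : TLaur n} (h : f ≠ 0) : phi n f ≠ 0 := by
  have hne : (f.coeff.support).Nonempty := Finsupp.support_nonempty_iff.mpr (mt AddMonoidAlgebra.coeff_eq_zero.mp h)
  obtain ⟨a, ha⟩ := hne
  intro hz
  have hdec : single a (f a) + eraseR a f = f := single_add_eraseR a f
  have hphi : phi n f = f a + phi n (eraseR a f) := by
    conv_lhs => rw [← hdec]
    rw [map_add, phi_single]
  rw [hz] at hphi
  exact mem_supportR.mp ha (T_add_eq_zero hphi.symm).1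

/-- The "zero-detector" congruence. -/
def Kcon (n : ℕ) : RingCon (TLaur n) where
  r a b := ((phi n) a = 0 ↔ (phi n) b = 0)
  iseqv := ⟨fun _ => Iff.rfl, Iff.symm, Iff.trans⟩
  mul' := by
    intro a b c d h1 h2
    replace h1 : (phi n) a = 0 ↔ (phi n) b = 0 := h1
    replace h2 : (phi n) c = 0 ↔ (phi n) d = 0 := h2
    simp only [map_mul, T_mul_eq_zero_iff]
    rw [h1, h2]
  add' := by
    intro a b c d h1 h2
    replace h1 : (phi n) a = 0 ↔ (phi n) b = 0 := h1
    replace h2 : (phi n) c = 0 ↔ (phi n) d = 0 := h2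
    simp only [map_add]
    constructor
    · intro h
      have h' := T_add_eq_zero h
      rw [h1.mp h'.1, h2.mp h'.2]; exact Tropical.add_self _
    · intro h
      have h' := T_add_eq_zero h
      rw [h1.mpr h'.1, h2.mpr h'.2]; exact Tropical.add_self _

end Rlemmas

section Main

variable {n : ℕ} {I : Ideal (TLaur n)}

/-- Abbreviation for the bend congruence of an ideal. -/
noncomputable abbrev CB (I : Ideal (TLaur n)) : RingCon (TLaur n) := Bend (I : Set (TLaur n))

lemma bend_gen {f : TLaur n} (hf : f ∈ I) {i : Fin n → ℤ}
    (hi : i ∈ f.coeff.support) :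
    CB I f (eraseR i f) :=
  RingConGen.Rel.of _ _ ⟨hf, i, hi, rfl⟩

lemma not_single_mem (hprime : I.IsPrime) (a : Fin n → ℤ) {c : T} (hc : c ≠ 0) :
    single a c ∉ I := by
  intro hmem
  obtain ⟨u, hu⟩ := unit_pair a hc
  have h1 : (1 : TLaur n) ∈ I := by
    rw [← hu]; exact I.mul_mem_right u hmem
  exact hprime.ne_top ((Ideal.eq_top_iff_one I).mpr h1)

lemma CB_le_Kcon (hprime : I.IsPrime) : CB I ≤ Kcon n := by
  apply RingCon.ringConGen_le.mpr
  rintro f g ⟨hf, i, hi, rfl⟩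
  have hfi : f i ≠ 0 := mem_supportR.mp hi
  have hfne : f ≠ 0 := by
    intro h; rw [h] at hfi; exact hfi rfl
  have hgne : (eraseR i f : TLaur n) ≠ 0 := by
    intro h
    have hdec : single i (f i) + eraseR i f = f := single_add_eraseR i f
    rw [h, add_zero] at hdec
    exact not_single_mem hprime i hfi (by rw [hdec]; exact hf)
  show (phi n) f = 0 ↔ (phi n) (eraseR i f) = 0
  constructor
  · intro h; exact absurd h (phi_ne_zero hfne)
  · intro h; exact absurd h (phi_ne_zero hgne)

/-- Step 1: a nonzero prime ideal contains a (two-term) binomial. -/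
lemma exists_binomial (hprime : I.IsPrime) (hnz : I ≠ ⊥) :
    ∃ (p q : Fin n → ℤ) (cp cq : T), p ≠ q ∧ cp ≠ 0 ∧ cq ≠ 0 ∧
      (single p cp + single q cq : TLaur n) ∈ I := by
  obtain ⟨f₀, hf₀I, hf₀⟩ := Submodule.exists_mem_ne_zero_of_ne_bot hnz
  suffices H : ∀ (k : ℕ) (f : TLaur n), f ∈ I → f ≠ 0 → (f.coeff.support).card ≤ k →
      ∃ (p q : Fin n → ℤ) (cp cq : T), p ≠ q ∧ cp ≠ 0 ∧ cq ≠ 0 ∧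
        (single p cp + single q cq : TLaur n) ∈ I by
    exact H f₀.coeff.support.card f₀ hf₀I hf₀ le_rfl
  intro k
  induction k with
  | zero =>
    intro f hfI hfne hcard
    exfalso
    have :  f.coeff.support = ∅ := Finset.card_eq_zero.mp (Nat.le_zero.mp hcard)
    exact hfne (AddMonoidAlgebra.coeff_eq_zero.mp (Finsupp.support_eq_empty.mp this))
  | succ k IH =>
    intro f hfI hfne hcard
    obtain ⟨p, hp⟩ := Finsupp.support_nonempty_iff.mpr (mt AddMonoidAlgebra.coeff_eq_zero.mp hfne)
    have hfp : f p ≠ 0 := mem_supportR.mp hp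
    set a : TLaur n := single p (f p) with ha
    set g : TLaur n := eraseR p f with hg
    have hdec1 : a + g = f := single_add_eraseR p f
    by_cases hgz : g = 0
    · exfalso
      rw [hgz, add_zero] at hdec1
      exact not_single_mem hprime p hfp (by rw [← ha, hdec1]; exact hfI)
    obtain ⟨q, hq⟩ := Finsupp.support_nonempty_iff.mpr (mt AddMonoidAlgebra.coeff_eq_zero.mp hgz)
    have hgq : g q ≠ 0 := mem_supportR.mp hq
    have hqsupp : q ∈ (f.coeff.support).erase p := by
      rw [← support_eraseR]; exact hq
    have hqp : q ≠ p := (Finset.mem_erase.mp hqsupp).1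
    set b : TLaur n := single q (g q) with hb
    set h : TLaur n := eraseR q g with hh
    have hdec2 : b + h = g := single_add_eraseR q g
    by_cases hhz : h = 0
    · rw [hhz, add_zero] at hdec2
      refine ⟨p, q, f p, g q, fun e => hqp e.symm, hfp, hgq, ?_⟩
      rw [← ha, ← hb, hdec2, hdec1]
      exact hfI
    have hkey : (a+b)*((a+h)*(b+h)) ∈ I := by
      rw [idem_Id1 R_add_idem a b h, hdec2, hdec1]
      exact I.mul_mem_right _ hfI
    -- cardinal bookkeeping
    have hcf2 : 2 ≤ (f.coeff.support).card := by
      have h1 : ((f.coeff.support).erase p).card = (f.coeff.support).card - 1 :=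
        Finset.card_erase_of_mem hp
      have h2 : 1 ≤ ((f.coeff.support).erase p).card :=
        Finset.card_pos.mpr ⟨q, hqsupp⟩
      omega
    have hsupph :  h.coeff.support = ((f.coeff.support).erase p).erase q := by
      rw [hh, support_eraseR, hg, support_eraseR]
    have hcardh : (h.coeff.support).card = (f.coeff.support).card - 2 := by
      rw [hsupph, Finset.card_erase_of_mem hqsupp, Finset.card_erase_of_mem hp]
      omega
    have hpnotinh : p ∉  h.coeff.support := by
      rw [hsupph]
      intro hmem
      exact (Finset.mem_erase.mp (Finset.mem_of_mem_erase hmem)).1 rfl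
    have hqnotinh : q ∉  h.coeff.support := by
      rw [hsupph]
      intro hmem
      exact (Finset.mem_erase.mp hmem).1 rfl
    rcases hprime.mem_or_mem hkey with hab | hrest
    · exact ⟨p, q, f p, g q, fun e => hqp e.symm, hfp, hgq, hab⟩
    rcases hprime.mem_or_mem hrest with hah | hbh
    · have hne : a + h ≠ 0 := by
        intro hz
        have := (R_add_eq_zero hz).1
        rw [ha] at this
        exact hfp (AddMonoidAlgebra.single_eq_zero.mp this)
      have hcard' : ((a + h).coeff.support).card ≤ k := by
        have hdisj : Disjoint (a.coeff.support) (h.coeff.support) := by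
          rw [ha, support_singleR p hfp]
          simpa using hpnotinh
        rw [support_addR hdisj, ha, support_singleR p hfp,
          Finset.card_union_of_disjoint (by rw [ha, support_singleR p hfp] at hdisj; exact hdisj),
          Finset.card_singleton, hcardh]
        omega
      exact IH (a + h) hah hne hcard'
    · have hne : b + h ≠ 0 := by
        intro hz
        have := (R_add_eq_zero hz).1
        rw [hb] at this
        exact hgq (AddMonoidAlgebra.single_eq_zero.mp this)
      have hcard' : ((b + h).coeff.support).card ≤ k := by
        have hdisj : Disjoint (b.coeff.support) (h.coeff.support) := by
          rw [hb, support_singleR q hgq]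
          simpa using hqnotinh
        rw [support_addR hdisj, hb, support_singleR q hgq,
          Finset.card_union_of_disjoint (by rw [hb, support_singleR q hgq] at hdisj; exact hdisj),
          Finset.card_singleton, hcardh]
        omega
      exact IH (b + h) hbh hne hcard'

lemma cbsymm {x y : TLaur n} (h : CB I x y) : CB I y x := (CB I).symm h
lemma cbtrans {x y z : TLaur n} (h1 : CB I x y) (h2 : CB I y z) : CB I x z :=
  (CB I).trans h1 h2
lemma cbrefl (x : TLaur n) : CB I x x := (CB I).refl x
lemma cbadd {x y z w : TLaur n} (h1 : CB I x y) (h2 : CB I z w) :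
    CB I (x + z) (y + w) := (CB I).add h1 h2
lemma cbmul {x y z w : TLaur n} (h1 : CB I x y) (h2 : CB I z w) :
    CB I (x * z) (y * w) := (CB I).mul h1 h2

lemma exists_norm_binomial (hprime : I.IsPrime) (hnz : I ≠ ⊥) :
    ∃ (c₀ : Fin n → ℤ) (e : T), c₀ ≠ 0 ∧ e ≠ 0 ∧
      ((1 : TLaur n) + single c₀ e) ∈ I := by
  obtain ⟨p, q, cp, cq, hpq, hcp, hcq, hmem⟩ := exists_binomial hprime hnz
  obtain ⟨dp, hdp⟩ := T_exists_inv hcp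
  have hdpne : dp ≠ 0 := by
    intro h; rw [h, mul_zero] at hdp; exact T_one_ne_zero hdp.symm
  refine ⟨q - p, cq * dp, sub_ne_zero.mpr (fun e => hpq e.symm), T_mul_ne_zero hcq hdpne, ?_⟩
  have hkey : (single p cp + single q cq) * single (-p) dp ∈ I :=
    I.mul_mem_right _ hmem
  rw [add_mul, single_mul_single, single_mul_single, hdp,
    show p + -p = 0 by abel, show q + -p = q - p by abel,
    ← AddMonoidAlgebra.one_def] at hkey
  exact hkey

lemma tot1 (hprime : I.IsPrime) (hnz : I ≠ ⊥) :
    ∀ (m : Fin n → ℤ) (d : T), d ≠ 0 →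
      CB I ((1 : TLaur n) + single m d) 1 ∨ CB I ((1 : TLaur n) + single m d) (single m d) := by
  classical
  obtain ⟨c₀, e, hc₀, he, hmem⟩ := exists_norm_binomial hprime hnz
  -- the two bend relations of the normalized binomial h₀ = 1 + μ
  have h₀0 : ((1 : TLaur n) + single c₀ e) 0 = 1 := by
    rw [R_add_apply, AddMonoidAlgebra.one_def, AddMonoidAlgebra.coeff_single, AddMonoidAlgebra.coeff_single,
        Finsupp.single_eq_same,
      Finsupp.single_eq_of_ne hc₀.symm, add_zero]
  have h₀c₀ : ((1 : TLaur n) + single c₀ e) c₀ = e := by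
    rw [R_add_apply, AddMonoidAlgebra.one_def, AddMonoidAlgebra.coeff_single, AddMonoidAlgebra.coeff_single,
      Finsupp.single_eq_of_ne hc₀, Finsupp.single_eq_same, zero_add]
  have Ch0mu : CB I ((1 : TLaur n) + single c₀ e) (single c₀ e) := by
    have hmemsupp : (0 : Fin n → ℤ) ∈ ((1 : TLaur n) + single c₀ e).coeff.support :=
      mem_supportR.mpr (by rw [h₀0]; exact T_one_ne_zero)
    have hb := bend_gen hmem hmemsupp
    rwa [show eraseR 0 ((1 : TLaur n) + single c₀ e) = single c₀ e by
      rw [AddMonoidAlgebra.one_def, eraseR_add, eraseR_single_same,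
        eraseR_single_ne hc₀.symm, zero_add]] at hb
  have Ch0one : CB I ((1 : TLaur n) + single c₀ e) 1 := by
    have hmemsupp : c₀ ∈ ((1 : TLaur n) + single c₀ e).coeff.support :=
      mem_supportR.mpr (by rw [h₀c₀]; exact he)
    have hb := bend_gen hmem hmemsupp
    rwa [show eraseR c₀ ((1 : TLaur n) + single c₀ e) = 1 by
      rw [AddMonoidAlgebra.one_def, eraseR_add, eraseR_single_ne hc₀,
        eraseR_single_same, add_zero]] at hb
  have Cmu1 : CB I (single c₀ e) (1 : TLaur n) := cbtrans (cbsymm Ch0mu) Ch0one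
  -- the scalar case
  have scalar_case : ∀ (v : TLaur n) (d' : T), CB I v (single 0 d') →
      CB I ((1 : TLaur n) + v) 1 ∨ CB I ((1 : TLaur n) + v) v := by
    intro v d' h
    have key : (1 : TLaur n) + single 0 d' = single 0 (1 + d') := by
      rw [AddMonoidAlgebra.one_def]
      exact (AddMonoidAlgebra.single_add 0 1 d').symm
    have h1 : CB I ((1 : TLaur n) + v) ((1 : TLaur n) + single 0 d') :=
      cbadd (cbrefl 1) h
    rcases T_add_total 1 d' with he1 | he2
    · left
      rw [key, he1, ← AddMonoidAlgebra.one_def] at h1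
      exact h1
    · right
      rw [key, he2] at h1
      exact cbtrans h1 (cbsymm h)
  intro m d hd
  by_cases hm0 : m = 0
  · subst hm0
    exact scalar_case (single 0 d) d (cbrefl _)
  by_cases hmc : m = c₀
  · rw [hmc]
    obtain ⟨e', hee'⟩ := T_exists_inv he
    have hstep : CB I (single (0 : Fin n → ℤ) (d * e') * single c₀ e)
        (single (0 : Fin n → ℤ) (d * e') * 1) := cbmul (cbrefl _) Cmu1
    rw [mul_one, single_mul_single, zero_add,
      show d * e' * e = d by rw [mul_assoc, mul_comm e' e, hee', mul_one]] at hstep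
    exact scalar_case (single c₀ d) (d * e') hstep
  by_cases hmnc : m = -c₀
  · rw [hmnc]
    have hstep : CB I (single (-c₀) d * single c₀ e) (single (-c₀) d * 1) :=
      cbmul (cbrefl _) Cmu1
    rw [mul_one, single_mul_single, show -c₀ + c₀ = 0 by abel] at hstep
    exact scalar_case (single (-c₀) d) (d * e) (cbsymm hstep)
  -- main case
  have hmc0ne : m + c₀ ≠ 0 := fun h => hmnc (eq_neg_of_add_eq_zero_left h)
  have hAB : ((1 : TLaur n) + single c₀ e + single m d) *
      (single m d * ((1 : TLaur n) + single c₀ e) + 1) ∈ I := by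
    rw [idem_Id2 R_add_idem (single c₀ e) (single m d)]
    exact I.mul_mem_right _ hmem
  have hvh : single m d * ((1 : TLaur n) + single c₀ e)
      = single m d + single (m + c₀) (d * e) := by
    rw [mul_add, mul_one, single_mul_single]
  rcases hprime.mem_or_mem hAB with hA | hB
  · left
    have hAm : ((1 : TLaur n) + single c₀ e + single m d) m = d := by
      rw [R_add_apply, R_add_apply, AddMonoidAlgebra.one_def, AddMonoidAlgebra.coeff_single, AddMonoidAlgebra.coeff_single,
        AddMonoidAlgebra.coeff_single,
        Finsupp.single_eq_of_ne hm0,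
        Finsupp.single_eq_of_ne hmc,
        Finsupp.single_eq_same, zero_add, zero_add]
    have hmA : m ∈ ((1 : TLaur n) + single c₀ e + single m d).coeff.support :=
      mem_supportR.mpr (by rw [hAm]; exact hd)
    have hb := bend_gen hA hmA
    rw [show eraseR m ((1 : TLaur n) + single c₀ e + single m d)
        = (1 : TLaur n) + single c₀ e by
      rw [eraseR_add, eraseR_add, AddMonoidAlgebra.one_def,
        eraseR_single_ne hm0, eraseR_single_ne hmc, eraseR_single_same, add_zero]] at hb
    have c2 : CB I ((1 : TLaur n) + single m d)
        ((1 : TLaur n) + single c₀ e + single m d) :=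
      cbadd (cbsymm Ch0one) (cbrefl (single m d))
    exact cbtrans (cbtrans c2 hb) Ch0one
  · right
    have hB0 : (single m d * ((1 : TLaur n) + single c₀ e) + 1) 0 = 1 := by
      rw [hvh, R_add_apply, R_add_apply, AddMonoidAlgebra.one_def, AddMonoidAlgebra.coeff_single, AddMonoidAlgebra.coeff_single,
        AddMonoidAlgebra.coeff_single,
        Finsupp.single_eq_of_ne (fun h => hm0 h.symm), Finsupp.single_eq_of_ne (fun h => hmc0ne h.symm),
        Finsupp.single_eq_same, zero_add, zero_add]
    have h0B : (0 : Fin n → ℤ) ∈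
        (single m d * ((1 : TLaur n) + single c₀ e) + 1).coeff.support :=
      mem_supportR.mpr (by rw [hB0]; exact T_one_ne_zero)
    have hb := bend_gen hB h0B
    have herase : eraseR 0 (single m d * ((1 : TLaur n) + single c₀ e) + 1)
        = single m d + single (m + c₀) (d * e) := by
      rw [hvh, eraseR_add, eraseR_add, AddMonoidAlgebra.one_def,
        eraseR_single_ne (fun h => hm0 h.symm),
        eraseR_single_ne (fun h => hmc0ne h.symm),
        eraseR_single_same, add_zero]
    rw [herase] at hb
    have cmuv : CB I (single (m + c₀) (d * e)) (single m d) := by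
      have hx := cbmul (cbrefl (single m d)) Cmu1
      rwa [mul_one, single_mul_single] at hx
    have c3 : CB I (single m d + single (m + c₀) (d * e)) (single m d) := by
      have hx := cbadd (cbrefl (single m d)) cmuv
      rwa [R_add_idem] at hx
    have cBv : CB I (single m d * ((1 : TLaur n) + single c₀ e) + 1) (single m d) :=
      cbtrans hb c3
    have heq1 : (1 : TLaur n) + (single m d * ((1 : TLaur n) + single c₀ e) + 1)
        = single m d * ((1 : TLaur n) + single c₀ e) + 1 := by
      rw [add_comm (1 : TLaur n) _, add_assoc, R_add_idem]
    have c1 : CB I ((1 : TLaur n) + single m d)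
        ((1 : TLaur n) + (single m d * ((1 : TLaur n) + single c₀ e) + 1)) :=
      cbadd (cbrefl 1) (cbsymm cBv)
    rw [heq1] at c1
    exact cbtrans c1 cBv

lemma cbeq {x y : TLaur n} (h : x = y) : CB I x y := h ▸ cbrefl x

lemma tot_pair (hprime : I.IsPrime) (hnz : I ≠ ⊥) (p q : Fin n → ℤ) {cp cq : T}
    (hcp : cp ≠ 0) (hcq : cq ≠ 0) :
    CB I (single p cp + single q cq) (single p cp) ∨
      CB I (single p cp + single q cq) (single q cq) := by
  obtain ⟨dp, hdp⟩ := T_exists_inv hcp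
  have hdpne : dp ≠ 0 := fun h => T_one_ne_zero (by rw [← hdp, h, mul_zero])
  have hco : cp * (cq * dp) = cq := by
    rw [mul_comm cq dp, ← mul_assoc, hdp, one_mul]
  have hrw : single p cp * ((1 : TLaur n) + single (q - p) (cq * dp))
      = single p cp + single q cq := by
    rw [mul_add, mul_one, single_mul_single, show p + (q - p) = q by abel, hco]
  have hrw2 : single p cp * single (q - p) (cq * dp) = single q cq := by
    rw [single_mul_single, show p + (q - p) = q by abel, hco]
  rcases tot1 hprime hnz (q - p) (cq * dp) (T_mul_ne_zero hcq hdpne) with h1 | h2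
  · left
    have hx := cbmul (cbrefl (single p cp)) h1
    rwa [hrw, mul_one] at hx
  · right
    have hx := cbmul (cbrefl (single p cp)) h2
    rwa [hrw, hrw2] at hx

lemma reps (hprime : I.IsPrime) (hnz : I ≠ ⊥) (f : TLaur n) :
    f = 0 ∨ ∃ (a : Fin n → ℤ) (c : T), c ≠ 0 ∧ CB I f (single a c) := by
  suffices H : ∀ (k : ℕ) (f : TLaur n), (f.coeff.support).card ≤ k →
      f = 0 ∨ ∃ (a : Fin n → ℤ) (c : T), c ≠ 0 ∧ CB I f (single a c) by
    exact H (f.coeff.support).card f le_rfl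
  intro k
  induction k with
  | zero =>
    intro f hcard
    left
    exact AddMonoidAlgebra.coeff_eq_zero.mp (Finsupp.support_eq_empty.mp (Finset.card_eq_zero.mp (Nat.le_zero.mp hcard)))
  | succ k IH =>
    intro f hcard
    by_cases hfz : f = 0
    · exact Or.inl hfz
    right
    obtain ⟨p, hp⟩ := Finsupp.support_nonempty_iff.mpr (mt AddMonoidAlgebra.coeff_eq_zero.mp hfz)
    have hfp : f p ≠ 0 := mem_supportR.mp hp
    have hdec : single p (f p) + eraseR p f = f := single_add_eraseR p f
    by_cases hgz : eraseR p f = 0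
    · rw [hgz, add_zero] at hdec
      exact ⟨p, f p, hfp, cbsymm (cbeq hdec)⟩
    have hcard' : ((eraseR p f).coeff.support).card ≤ k := by
      rw [support_eraseR, Finset.card_erase_of_mem hp]
      omega
    rcases IH (eraseR p f) hcard' with h0 | ⟨b, cb, hcb, hC⟩
    · exact absurd h0 hgz
    have c1 : CB I f (single p (f p) + single b cb) :=
      cbtrans (cbsymm (cbeq hdec)) (cbadd (cbrefl (single p (f p))) hC)
    rcases tot_pair hprime hnz p b hfp hcb with h1 | h2
    · exact ⟨p, f p, hfp, cbtrans c1 h1⟩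
    · exact ⟨b, cb, hcb, cbtrans c1 h2⟩

lemma rep' (hprime : I.IsPrime) (hnz : I ≠ ⊥) (x : TLaur n) :
    ∃ r, CB I x r ∧ (r = 0 ∨ ∃ (a : Fin n → ℤ) (c : T), c ≠ 0 ∧ r = single a c) := by
  rcases reps hprime hnz x with rfl | ⟨a, c, hc, hC⟩
  · exact ⟨0, cbrefl 0, Or.inl rfl⟩
  · exact ⟨single a c, hC, Or.inr ⟨a, c, hc, rfl⟩⟩

lemma cb_cancel (a : Fin n → ℤ) {c : T} (hc : c ≠ 0) {x y : TLaur n}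
    (h : CB I (single a c * x) (single a c * y)) : CB I x y := by
  obtain ⟨u, hu⟩ := unit_pair a hc
  have hx := cbmul (cbrefl u) h
  rwa [← mul_assoc, ← mul_assoc, mul_comm u (single a c), hu, one_mul, one_mul] at hx

lemma cb_cancel_single {p1 p2 w : Fin n → ℤ} {c1 c2 cw : T} (hcw : cw ≠ 0)
    (h : CB I (single (p1 + w) (c1 * cw)) (single (p2 + w) (c2 * cw))) :
    CB I (single p1 c1) (single p2 c2) := by
  obtain ⟨dw, hdw⟩ := T_exists_inv hcw
  have hx := cbmul h (cbrefl (single (-w) dw : TLaur n))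
  rwa [single_mul_single, single_mul_single,
    show p1 + w + -w = p1 by abel, show p2 + w + -w = p2 by abel,
    mul_assoc, hdw, mul_one, mul_assoc, hdw, mul_one] at hx

lemma dom_trans {x y z : TLaur n} (h1 : CB I (x + y) y) (h2 : CB I (y + z) z) :
    CB I (x + z) z := by
  have a1 : CB I (x + z) (x + (y + z)) := cbadd (cbrefl x) (cbsymm h2)
  have a2 : CB I (x + (y + z)) (y + z) := by
    have hx := cbadd h1 (cbrefl z)
    rwa [add_assoc] at hx
  exact cbtrans (cbtrans a1 a2) h2

lemma dom_mul {x y : TLaur n} (w : TLaur n) (h : CB I (x + y) y) :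
    CB I (x * w + y * w) (y * w) := by
  have hx := cbmul h (cbrefl w); rwa [add_mul] at hx

lemma dom_mul_left {x y : TLaur n} (w : TLaur n) (h : CB I (x + y) y) :
    CB I (w * x + w * y) (w * y) := by
  have hx := cbmul (cbrefl w) h; rwa [mul_add] at hx

/-- Main combinatorial step, aligned case: `U₂ ⊴ U₁` and `V₂ ⊴ V₁`. -/
lemma M1 (hprime : I.IsPrime) (hnz : I ≠ ⊥) {p1 p2 q1 q2 : Fin n → ℤ}
    {a1 a2 b1 b2 : T}
    (ha1 : a1 ≠ 0) (ha2 : a2 ≠ 0) (hb1 : b1 ≠ 0) (hb2 : b2 ≠ 0)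
    (hu : CB I (single p2 a2 + single p1 a1) (single p1 a1))
    (hv : CB I (single q2 b2 + single q1 b1) (single q1 b1))
    (H : CB I (single (p1+q1) (a1*b1) + single (p2+q2) (a2*b2))
              (single (p1+q2) (a1*b2) + single (p2+q1) (a2*b1))) :
    CB I (single p1 a1) (single p2 a2) ∨ CB I (single q1 b1) (single q2 b2) := by
  have d1 := dom_mul_left (single p2 a2 : TLaur n) hv
  rw [single_mul_single, single_mul_single] at d1
  have d2 := dom_mul (single q1 b1 : TLaur n) hu
  rw [single_mul_single, single_mul_single] at d2
  have dA := dom_trans d1 d2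
  rw [add_comm] at dA
  have e1 := cbtrans (cbsymm dA) H
  rcases tot_pair hprime hnz (p1+q2) (p2+q1)
      (T_mul_ne_zero ha1 hb2) (T_mul_ne_zero ha2 hb1) with h1 | h2
  · right
    have hx := cbtrans e1 h1
    rw [show p1+q1 = q1+p1 by abel, show p1+q2 = q2+p1 by abel,
      mul_comm a1 b1, mul_comm a1 b2] at hx
    exact cb_cancel_single ha1 hx
  · left
    have hx := cbtrans e1 h2
    exact cb_cancel_single hb1 hx

/-- Main combinatorial step, mixed case: `U₂ ⊴ U₁` and `V₁ ⊴ V₂`. -/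
lemma M2 (hprime : I.IsPrime) (hnz : I ≠ ⊥) {p1 p2 q1 q2 : Fin n → ℤ}
    {a1 a2 b1 b2 : T}
    (ha1 : a1 ≠ 0) (ha2 : a2 ≠ 0) (hb1 : b1 ≠ 0) (hb2 : b2 ≠ 0)
    (hu : CB I (single p2 a2 + single p1 a1) (single p1 a1))
    (hv : CB I (single q1 b1 + single q2 b2) (single q2 b2))
    (H : CB I (single (p1+q1) (a1*b1) + single (p2+q2) (a2*b2))
              (single (p1+q2) (a1*b2) + single (p2+q1) (a2*b1))) :
    CB I (single p1 a1) (single p2 a2) ∨ CB I (single q1 b1) (single q2 b2) := by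
  -- U₂V₁ ⊴ U₁V₁ ⊴ U₁V₂
  have d1 := dom_mul (single q1 b1 : TLaur n) hu
  rw [single_mul_single, single_mul_single] at d1
  have d2 := dom_mul_left (single p1 a1 : TLaur n) hv
  rw [single_mul_single, single_mul_single] at d2
  have dR := dom_trans d1 d2
  -- dR : C (single (p2+q1)(a2 b1) + single (p1+q2)(a1 b2)) (single (p1+q2)(a1 b2))
  rw [add_comm] at dR
  have e1 := cbtrans H dR
  -- e1 : C (LHS) (single (p1+q2)(a1 b2))
  rcases tot_pair hprime hnz (p1+q1) (p2+q2)
      (T_mul_ne_zero ha1 hb1) (T_mul_ne_zero ha2 hb2) with h1 | h2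
  · right
    have hx := cbtrans (cbsymm e1) h1
    -- hx : C (single (p1+q2)(a1b2)) (single (p1+q1)(a1b1))
    have hy := cbsymm hx
    rw [show p1+q1 = q1+p1 by abel, show p1+q2 = q2+p1 by abel,
      mul_comm a1 b1, mul_comm a1 b2] at hy
    exact cb_cancel_single ha1 hy
  · left
    have hx := cbtrans (cbsymm e1) h2
    -- hx : C (single (p1+q2)(a1b2)) (single (p2+q2)(a2b2))
    rw [show p1+q2 = p1+q2 by rfl] at hx
    exact cb_cancel_single hb2 hx

end Main

/-- If `I` is a non-zero prime ideal of the tropical Laurent polynomial semiring,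
then `Bend(I)` is a prime congruence. -/
theorem bend_of_prime_ideal_isPrime {n : ℕ} (I : Ideal (TLaur n))
    (hprime : I.IsPrime) (hnz : I ≠ ⊥) :
    IsPrimeCon (Bend (I : Set (TLaur n))) := by
  constructor
  · refine ⟨0, 1, fun h => ?_⟩
    have hk : Kcon n 0 1 := CB_le_Kcon hprime h
    replace hk : (phi n) (0 : TLaur n) = 0 ↔ (phi n) (1 : TLaur n) = 0 := hk
    rw [map_zero, map_one] at hk
    exact T_one_ne_zero (hk.mp rfl)
  · intro α β H
    replace H : CB I (α.1 * β.1 + α.2 * β.2) (α.1 * β.2 + α.2 * β.1) := H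
    obtain ⟨r1, hr1, hc1⟩ := rep' hprime hnz α.1
    obtain ⟨r2, hr2, hc2⟩ := rep' hprime hnz α.2
    obtain ⟨s1, hs1, hc3⟩ := rep' hprime hnz β.1
    obtain ⟨s2, hs2, hc4⟩ := rep' hprime hnz β.2
    have H' : CB I (r1 * s1 + r2 * s2) (r1 * s2 + r2 * s1) :=
      cbtrans (cbtrans (cbsymm (cbadd (cbmul hr1 hs1) (cbmul hr2 hs2))) H)
        (cbadd (cbmul hr1 hs2) (cbmul hr2 hs1))
    suffices hS : CB I r1 r2 ∨ CB I s1 s2 by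
      rcases hS with h | h
      · exact Or.inl (cbtrans (cbtrans hr1 h) (cbsymm hr2))
      · exact Or.inr (cbtrans (cbtrans hs1 h) (cbsymm hs2))
    rcases hc1 with rfl | ⟨p1, a1, ha1, rfl⟩
    · rcases hc2 with rfl | ⟨p2, a2, ha2, rfl⟩
      · exact Or.inl (cbrefl 0)
      · rw [zero_mul, zero_add, zero_mul, zero_add] at H'
        exact Or.inr (cbsymm (cb_cancel p2 ha2 H'))
    · rcases hc2 with rfl | ⟨p2, a2, ha2, rfl⟩
      · rw [zero_mul, add_zero, zero_mul, add_zero] at H'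
        exact Or.inr (cb_cancel p1 ha1 H')
      · rcases hc3 with rfl | ⟨q1, b1, hb1, rfl⟩
        · rcases hc4 with rfl | ⟨q2, b2, hb2, rfl⟩
          · exact Or.inr (cbrefl 0)
          · rw [mul_zero, zero_add, mul_zero, add_zero] at H'
            rw [single_mul_single, single_mul_single] at H'
            exact Or.inl (cb_cancel_single hb2 (cbsymm H'))
        · rcases hc4 with rfl | ⟨q2, b2, hb2, rfl⟩
          · rw [mul_zero, add_zero, mul_zero, zero_add] at H'
            rw [single_mul_single, single_mul_single] at H'
            exact Or.inl (cb_cancel_single hb1 H')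
          · rw [single_mul_single, single_mul_single, single_mul_single,
              single_mul_single] at H'
            rcases tot_pair hprime hnz p1 p2 ha1 ha2 with hU | hU <;>
              rcases tot_pair hprime hnz q1 q2 hb1 hb2 with hV | hV
            · -- U₂ ⊴ U₁, V₂ ⊴ V₁
              rw [add_comm] at hU hV
              exact M1 hprime hnz ha1 ha2 hb1 hb2 hU hV H'
            · -- U₂ ⊴ U₁, V₁ ⊴ V₂
              rw [add_comm] at hU
              exact M2 hprime hnz ha1 ha2 hb1 hb2 hU hV H'
            · -- U₁ ⊴ U₂, V₂ ⊴ V₁ : swap the roles of U and V, use M2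
              rw [add_comm] at hV
              have H'' := H'
              rw [show p1+q1 = q1+p1 by abel, mul_comm a1 b1,
                show p2+q2 = q2+p2 by abel, mul_comm a2 b2,
                show p2+q1 = q1+p2 by abel, mul_comm a2 b1,
                show p1+q2 = q2+p1 by abel, mul_comm a1 b2,
                add_comm (single (q2+p1) (b2*a1) : TLaur n) (single (q1+p2) (b1*a2))] at H''
              rcases M2 hprime hnz hb1 hb2 ha1 ha2 hV hU H'' with h | h
              · exact Or.inr h
              · exact Or.inl h
            · -- U₁ ⊴ U₂, V₁ ⊴ V₂ : swap indices 1 ↔ 2, use M1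
              have H'' := H'
              rw [add_comm (single (p1+q1) (a1*b1) : TLaur n) (single (p2+q2) (a2*b2)),
                add_comm (single (p1+q2) (a1*b2) : TLaur n) (single (p2+q1) (a2*b1))] at H''
              rcases M1 hprime hnz ha2 ha1 hb2 hb1 hU hV H'' with h | h
              · exact Or.inl (cbsymm h)
              · exact Or.inr (cbsymm h)
end

section
/- If I is a non-zero prime ideal of the tropical Laurent polynomial semiring T[x₁^{±1},…,x_n^{±1}], then its tropical variety V(I) ⊆ ℝⁿ contains at most one point. -/
/-- The value of the `u`-th term of the Laurent polynomial `f` at the point `p ∈ ℝⁿ`. -/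
noncomputable def trm {n : ℕ} (f : TLaur n) (p : Fin n → ℝ) (u : Fin n → ℤ) : T :=
  toF f u * Tropical.trop ((OrderDual.toDual (∑ i, (u i : ℝ) * p i) : OrderDual ℝ) :
    WithTop (OrderDual ℝ))

/-- Tropical evaluation of the Laurent polynomial `f` at `p ∈ ℝⁿ`
(the maximum of its term values). -/
noncomputable def evl {n : ℕ} (f : TLaur n) (p : Fin n → ℝ) : T :=
  ∑ u ∈ (toF f).support, trm f p u

/-- `f` tropically vanishes at `p`: its value is `-∞`, or its maximum is attained
by at least two distinct terms. -/
def Vanishes {n : ℕ} (f : TLaur n) (p : Fin n → ℝ) : Prop :=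
  evl f p = 0 ∨ ∃ u ∈ (toF f).support, ∃ v ∈ (toF f).support,
    u ≠ v ∧ trm f p u = evl f p ∧ trm f p v = evl f p

/-! ### Auxiliary material -/

/-- The real number `r`, viewed as a (nonzero) element of the tropical semifield. -/
noncomputable def tre (r : ℝ) : T :=
  Tropical.trop ((OrderDual.toDual r : OrderDual ℝ) : WithTop (OrderDual ℝ))

lemma tre_mul (r s : ℝ) : tre r * tre s = tre (r + s) := by
  apply Tropical.untrop_injective
  rw [Tropical.untrop_mul]
  rfl

lemma tre_ne_zero (r : ℝ) : tre r ≠ 0 := by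
  intro h
  have := Tropical.trop_injective h
  exact (WithTop.coe_ne_top (a := (OrderDual.toDual r))) (by exact_mod_cast this)

lemma tre_le_tre {r s : ℝ} : tre r ≤ tre s ↔ s ≤ r := by
  rw [← Tropical.untrop_le_iff]
  exact WithTop.coe_le_coe

lemma tre_lt_tre {r s : ℝ} : tre r < tre s ↔ s < r := by
  rw [← Tropical.untrop_lt_iff]
  exact WithTop.coe_lt_coe

lemma exists_tre {c : T} (h : c ≠ 0) : ∃ r : ℝ, c = tre r := by
  obtain ⟨a, ha⟩ := WithTop.ne_top_iff_exists.mp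
    (fun ht => h (Tropical.untrop_injective (by simpa [Tropical.untrop_zero] using ht)))
  exact ⟨OrderDual.ofDual a, Tropical.untrop_injective (by simp [tre, ← ha])⟩

lemma sum_le_mem {S : Type*} {s : Finset S} {g : S → T} {i : S} (hi : i ∈ s) :
    (∑ j ∈ s, g j) ≤ g i := by
  rw [← Tropical.untrop_le_iff, Finset.untrop_sum']
  exact Finset.inf_le hi

lemma mem_le_sum {S : Type*} {s : Finset S} {g : S → T} {a : T}
    (h : ∀ j ∈ s, a ≤ g j) : a ≤ ∑ j ∈ s, g j := by
  rw [← Tropical.untrop_le_iff, Finset.untrop_sum']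
  exact Finset.le_inf fun j hj => Tropical.untrop_le_iff.mpr (h j hj)

lemma zero_is_top (x : T) : x ≤ 0 := by
  rw [← Tropical.untrop_le_iff, Tropical.untrop_zero]; exact le_top

lemma tadd_le_left (x y : T) : x + y ≤ x := by
  rw [← Tropical.untrop_le_iff, Tropical.untrop_add]; exact min_le_left _ _

lemma tadd_le_right (x y : T) : x + y ≤ y := by
  rw [← Tropical.untrop_le_iff, Tropical.untrop_add]; exact min_le_right _ _

/-- The linear form `u ↦ ⟨u, p⟩`. -/
noncomputable def dp {n : ℕ} (u : Fin n → ℤ) (p : Fin n → ℝ) : ℝ :=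
  ∑ i, (u i : ℝ) * p i

lemma trm_def {n : ℕ} (f : TLaur n) (p : Fin n → ℝ) (u : Fin n → ℤ) :
    trm f p u = toF f u * tre (dp u p) := rfl

lemma dp_add {n : ℕ} (u v : Fin n → ℤ) (p : Fin n → ℝ) :
    dp (u + v) p = dp u p + dp v p := by
  simp only [dp, ← Finset.sum_add_distrib]
  refine Finset.sum_congr rfl fun i _ => ?_
  push_cast [Pi.add_apply]
  ring

lemma dp_single {n : ℕ} (i : Fin n) (k : ℤ) (p : Fin n → ℝ) :
    dp (Pi.single i k) p = (k : ℝ) * p i := by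
  simp only [dp]
  rw [Finset.sum_eq_single i]
  · simp
  · intro j _ hj
    simp [Pi.single_apply, hj]
  · simp

/-- If the evaluation of `g` at `p` is attained at a unique term, which is nonzero,
then `g` does not tropically vanish at `p`. -/
lemma not_vanishes {n : ℕ} (g : TLaur n) (p : Fin n → ℝ) (u : Fin n → ℤ)
    (hu : u ∈ (toF g).support) (h0 : trm g p u ≠ 0)
    (hlt : ∀ w ∈ (toF g).support, w ≠ u → trm g p u < trm g p w) :
    ¬ Vanishes g p := by
  have hevl : evl g p = trm g p u := by
    refine le_antisymm (sum_le_mem hu) (mem_le_sum fun w hw => ?_)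
    by_cases h : w = u
    · rw [h]
    · exact (hlt w hw h).le
  rintro (h | ⟨u', hu', v', hv', hne, h1, h2⟩)
  · exact h0 (hevl ▸ h)
  · rcases hne.ne_or_ne u with h' | h'
    · have := hlt u' hu' h'
      rw [hevl] at h1
      exact absurd h1.symm (ne_of_lt this)
    · have := hlt v' hv' h'
      rw [hevl] at h2
      exact absurd h2.symm (ne_of_lt this)

/-- Adding to `f` a monomial whose value at `p` strictly exceeds the evaluation of `f`
at `p` produces a polynomial which does not vanish at `p`. -/
lemma key_case {n : ℕ} (f : TLaur n) (p : Fin n → ℝ) (u : Fin n → ℤ) (a M : ℝ)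
    (hM : evl f p = tre M) (hu_not : u ∉ (toF f).support)
    (ha : M < a + dp u p) :
    ¬ Vanishes (f + AddMonoidAlgebra.single u (tre a)) p := by
  set g : TLaur n := f + AddMonoidAlgebra.single u (tre a) with hg
  have hfu : toF f u = 0 := Finsupp.notMem_support_iff.mp hu_not
  have htoF : ∀ w, toF g w = toF f w + Finsupp.single u (tre a) w := fun w => by
    simp only [toF, hg, AddMonoidAlgebra.coeff_add, AddMonoidAlgebra.coeff_single, Finsupp.add_apply]
  have hgu : toF g u = tre a := by
    rw [htoF, hfu, zero_add, Finsupp.single_eq_same]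
  have hgw : ∀ w, w ≠ u → toF g w = toF f w := by
    intro w hw
    rw [htoF, Finsupp.single_eq_of_ne hw, add_zero]
  have hu_mem : u ∈ (toF g).support := Finsupp.mem_support_iff.mpr (hgu ▸ tre_ne_zero a)
  have htrmu : trm g p u = tre (a + dp u p) := by
    rw [trm_def, hgu, tre_mul]
  refine not_vanishes g p u hu_mem (htrmu ▸ tre_ne_zero _) ?_
  intro w hw hwu
  have hfw : toF f w ≠ 0 := by
    have := Finsupp.mem_support_iff.mp hw
    rwa [hgw w hwu] at this
  obtain ⟨δ, hδ⟩ := exists_tre hfw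
  have htrmw : trm g p w = tre (δ + dp w p) := by
    rw [trm_def, hgw w hwu, hδ, tre_mul]
  have hbound : δ + dp w p ≤ M := by
    have h1 : evl f p ≤ trm f p w := sum_le_mem (Finsupp.mem_support_iff.mpr hfw)
    rw [hM, trm_def, hδ, tre_mul] at h1
    exact tre_le_tre.mp h1
  rw [htrmu, htrmw, tre_lt_tre]
  linarith

/-- The tropical variety of a non-zero prime ideal of the tropical Laurent polynomial
semiring contains at most one point. -/
theorem variety_of_prime_ideal_subsingleton {n : ℕ} (I : Ideal (TLaur n))
    (hprime : I.IsPrime) (hnz : I ≠ ⊥) :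
    Set.Subsingleton {p : Fin n → ℝ | ∀ f ∈ I, Vanishes f p} := by
  intro p hp q hq
  by_contra hne
  obtain ⟨f, hfI, hf0⟩ := Submodule.exists_mem_ne_zero_of_ne_bot hnz
  -- a point of the support of f
  have hsupp : (toF f).support.Nonempty := Finsupp.support_nonempty_iff.mpr
    (fun h => hf0 (AddMonoidAlgebra.coeff_eq_zero.mp h))
  obtain ⟨s, hs⟩ := hsupp
  obtain ⟨γ, hγ⟩ := exists_tre (Finsupp.mem_support_iff.mp hs)
  -- evaluations of f are nonzero
  have hevl_ne : ∀ r : Fin n → ℝ, evl f r ≠ 0 := by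
    intro r h
    have h1 : evl f r ≤ trm f r s := sum_le_mem hs
    rw [h] at h1
    have h2 : trm f r s = 0 := le_antisymm (zero_is_top _) h1
    rw [trm_def, hγ, tre_mul] at h2
    exact tre_ne_zero _ h2
  obtain ⟨Mp, hMp⟩ := exists_tre (hevl_ne p)
  obtain ⟨Mq, hMq⟩ := exists_tre (hevl_ne q)
  -- a coordinate where p and q differ
  obtain ⟨i, hi⟩ := Function.ne_iff.mp hne
  set d : ℝ := p i - q i with hd_def
  have hd : d ≠ 0 := sub_ne_zero.mpr hi
  -- choose the shift k
  set N₀ : ℕ := (toF f).support.sup (fun w => (w i).natAbs) with hN₀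
  set C : ℝ := Mp + Mq + 2 - dp s p - dp s q - (γ + γ) with hC
  set m : ℕ := max (N₀ + (s i).natAbs + 1) ⌈C / |d|⌉₊ with hm
  set k : ℤ := if 0 < d then (m : ℤ) else -(m : ℤ) with hk
  clear_value N₀ C m k
  have hmd : C ≤ (m : ℝ) * |d| := by
    have h1 : C / |d| ≤ (⌈C / |d|⌉₊ : ℝ) := Nat.le_ceil _
    have h2 : ((⌈C / |d|⌉₊ : ℕ) : ℝ) ≤ (m : ℝ) := by
      have : ⌈C / |d|⌉₊ ≤ m := by rw [hm]; exact le_max_right _ _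
      exact_mod_cast this
    have h3 : C / |d| * |d| ≤ (m : ℝ) * |d| :=
      mul_le_mul_of_nonneg_right (h1.trans h2) (abs_nonneg d)
    rwa [div_mul_cancel₀ _ (abs_ne_zero.mpr hd)] at h3
  have hkd : C ≤ (k : ℝ) * d := by
    rcases lt_trichotomy d 0 with hneg | hzero | hpos
    · have hk' : k = -(m : ℤ) := by rw [hk, if_neg (not_lt.mpr hneg.le)]
      rw [hk']
      push_cast
      calc C ≤ (m : ℝ) * |d| := hmd
        _ = -(m : ℝ) * d := by rw [abs_of_neg hneg]; ring
    · exact absurd hzero hd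
    · have hk' : k = (m : ℤ) := by rw [hk, if_pos hpos]
      rw [hk']
      push_cast
      calc C ≤ (m : ℝ) * |d| := hmd
        _ = (m : ℝ) * d := by rw [abs_of_pos hpos]
  have hkabs : N₀ + (s i).natAbs < k.natAbs := by
    have h1 : N₀ + (s i).natAbs + 1 ≤ m := by rw [hm]; exact le_max_left _ _
    have h2 : k.natAbs = m := by
      rcases le_or_gt d 0 with h | h
      · rw [hk, if_neg (not_lt.mpr h), Int.natAbs_neg, Int.natAbs_natCast]
      · rw [hk, if_pos h, Int.natAbs_natCast]
    rw [h2]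
    exact Nat.lt_of_lt_of_le (Nat.lt_succ_self _) h1
  -- exponents
  set u : Fin n → ℤ := s + Pi.single i k with hu_def
  set v : Fin n → ℤ := s + Pi.single i (-k) with hv_def
  clear_value u v
  have huv : u + v = s + s := by
    funext j
    simp only [hu_def, hv_def, Pi.add_apply, Pi.single_apply]
    split_ifs <;> ring
  have hui : u i = s i + k := by simp [hu_def]
  have hvi : v i = s i + -k := by simp [hv_def]
  have hsup_bound : ∀ w ∈ (toF f).support, (w i).natAbs ≤ N₀ :=
    fun w hw => by rw [hN₀]; exact Finset.le_sup (f := fun w => (w i).natAbs) hw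
  have hu_not : u ∉ (toF f).support := by
    intro h
    have h1 : (u i).natAbs ≤ N₀ := hsup_bound u h
    rw [hui] at h1
    have h2 : k.natAbs ≤ (s i + k).natAbs + (s i).natAbs := by
      have h3 := Int.natAbs_sub_le (s i + k) (s i)
      simpa using h3
    exact absurd (lt_of_le_of_lt (le_trans h2 (Nat.add_le_add_right h1 _)) hkabs)
      (lt_irrefl _)
  have hv_not : v ∉ (toF f).support := by
    intro h
    have h1 : (v i).natAbs ≤ N₀ := hsup_bound v h
    rw [hvi] at h1
    have h2 : k.natAbs ≤ (s i + -k).natAbs + (s i).natAbs := by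
      have h3 := Int.natAbs_sub_le (s i + -k) (s i)
      rw [← Int.natAbs_neg]
      simpa using h3
    exact absurd (lt_of_le_of_lt (le_trans h2 (Nat.add_le_add_right h1 _)) hkabs)
      (lt_irrefl _)
  -- the coefficients
  set a : ℝ := Mp - dp u p + 1 with ha_def
  set b : ℝ := Mq - dp v q + 1 with hb_def
  have hdup : dp u p = dp s p + (k : ℝ) * p i := by
    rw [hu_def, dp_add, dp_single]
  have hdvq : dp v q = dp s q + -(k : ℝ) * q i := by
    rw [hv_def, dp_add, dp_single]
    push_cast
    ring
  have hab : a + b ≤ γ + γ := by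
    have h1 : (k : ℝ) * d = (k : ℝ) * p i - (k : ℝ) * q i := by
      rw [hd_def]; ring
    rw [ha_def, hb_def, hdup, hdvq]
    have := hkd
    rw [hC] at this
    linarith
  -- the monomials and the product
  set A : TLaur n := AddMonoidAlgebra.single u (tre a) with hA
  set B : TLaur n := AddMonoidAlgebra.single v (tre b) with hB
  set F : TLaur n := f * f + f * B + A * f with hF
  have hFI : F ∈ I :=
    I.add_mem (I.add_mem (Ideal.mul_mem_left I f hfI) (Ideal.mul_mem_right B I hfI))
      (Ideal.mul_mem_left I A hfI)
  -- bound on the coefficient of F at s + s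
  have hff_bound : toF (f * f) (s + s) ≤ tre (γ + γ) := by
    have hsplit : AddMonoidAlgebra.ofCoeff ((toF f).erase s) +
        AddMonoidAlgebra.single s (toF f s) = f :=
      AddMonoidAlgebra.erase_add_single s f
    set e : TLaur n := AddMonoidAlgebra.ofCoeff ((toF f).erase s) with he
    set M : TLaur n := AddMonoidAlgebra.single s (toF f s) with hMdef
    have hfem : f = e + M := hsplit.symm
    have hexp : f * f = (e * e + e * M + M * e) + M * M := by
      rw [hfem]; ring
    have hMM : M * M = AddMonoidAlgebra.single (s + s) (tre (γ + γ)) := by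
      rw [hMdef, AddMonoidAlgebra.single_mul_single, hγ, tre_mul]
    have happ : toF (f * f) (s + s) =
        toF (e * e + e * M + M * e) (s + s) + toF (M * M) (s + s) := by
      rw [hexp]; simp only [toF, AddMonoidAlgebra.coeff_add, AddMonoidAlgebra.coeff_single, Finsupp.add_apply]
    rw [happ, hMM]
    refine le_trans (tadd_le_right _ _) ?_
    rw [show toF (AddMonoidAlgebra.single (s+s) (tre (γ+γ))) (s+s) = tre (γ+γ) from
      Finsupp.single_eq_same]
  have hFcoeff : toF F (s + s) ≤ tre (a + b) := by
    have happ : toF F (s + s) =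
        (toF (f * f) (s + s) + toF (f * B) (s + s)) + toF (A * f) (s + s) := by
      rw [hF]; simp only [toF, AddMonoidAlgebra.coeff_add, AddMonoidAlgebra.coeff_single, Finsupp.add_apply]
    rw [happ]
    refine le_trans (tadd_le_left _ _) (le_trans (tadd_le_left _ _) ?_)
    exact le_trans hff_bound (tre_le_tre.mpr hab)
  -- absorption
  have hAB : A * B = AddMonoidAlgebra.single (s + s) (tre (a + b)) := by
    rw [hA, hB, AddMonoidAlgebra.single_mul_single, tre_mul, huv]
  have habs : F + AddMonoidAlgebra.single (s + s) (tre (a + b)) = F := by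
    apply AddMonoidAlgebra.ext
    apply Finsupp.ext
    intro x
    have happ : toF (F + AddMonoidAlgebra.single (s + s) (tre (a + b))) x =
        toF F x + Finsupp.single (s + s) (tre (a + b)) x := by
        simp only [toF, AddMonoidAlgebra.coeff_add, AddMonoidAlgebra.coeff_single, Finsupp.add_apply]
    show toF (F + AddMonoidAlgebra.single (s + s) (tre (a + b))) x = toF F x
    rw [happ]
    by_cases hx : x = s + s
    · subst hx
      rw [Finsupp.single_eq_same]
      exact Tropical.add_eq_left hFcoeff
    · rw [Finsupp.single_eq_of_ne hx, add_zero]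
  have hprod : (f + A) * (f + B) = F := by
    have h1 : (f + A) * (f + B) = F + A * B := by rw [hF]; ring
    rw [h1, hAB, habs]
  have hmem : (f + A) * (f + B) ∈ I := by rw [hprod]; exact hFI
  rcases hprime.mem_or_mem hmem with h | h
  · exact key_case f p u a Mp hMp hu_not (by rw [ha_def]; linarith) (hp (f + A) h)
  · exact key_case f q v b Mq hMq hv_not (by rw [hb_def]; linarith) (hq (f + B) h)
end

section
/- There is a bijection between prime tropical ideals of T[x₁^{±1},…,x_n^{±1}] and prime tropical ideals of T[x₁,…,x_n] not containing a monomial, given by I ↦ I ∩ T[x₁,…,x_n] with inverse J ↦ J·T[x₁^{±1},…,x_n^{±1}]. -/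
/-- The monomial-elimination (valuated matroid circuit) axiom for an ideal:
whenever a monomial `x^u` occurs in `f, g ∈ I` with the same nonzero coefficient,
there is `h ∈ I` not involving `x^u` whose coefficients satisfy
`c_v(h) ≤ c_v(f) + c_v(g)` (tropical `+` is `max`), with equality when `c_v(f) ≠ c_v(g)`. -/
def IsTropicalIdeal {G : Type} [AddCommMonoid G] (I : Set (AddMonoidAlgebra T G)) : Prop :=
  ∀ f ∈ I, ∀ g ∈ I, ∀ u : G,
    toF f u ≠ 0 → toF f u = toF g u →
      ∃ h ∈ I, toF h u = 0 ∧ ∀ v : G, v ≠ u →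
        (toF h v + (toF f v + toF g v) = toF f v + toF g v) ∧
        (toF f v ≠ toF g v → toF h v = toF f v + toF g v)

/-- The inclusion `T[x₁,…,x_n] →+* T[x₁^{±1},…,x_n^{±1}]`. -/
noncomputable def incl (n : ℕ) : TPoly n →+* TLaur n :=
  AddMonoidAlgebra.mapDomainRingHom T
    (AddMonoidHom.mk' (fun u : Fin n → ℕ => fun i => (u i : ℤ))
      (by intro a b; funext i; simp))

/-- `J` contains no monomial (no single term with nonzero coefficient). -/
def NoMonomial {n : ℕ} (J : Ideal (TPoly n)) : Prop :=
  ∀ (u : Fin n → ℕ) (c : T), c ≠ 0 →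
    (AddMonoidAlgebra.ofCoeff (Finsupp.single u c : (Fin n → ℕ) →₀ T) : TPoly n) ∉ J

/-! ### Auxiliary infrastructure -/

namespace TropAux

variable {n : ℕ}

/-- The exponent embedding `ℕ^n → ℤ^n`. -/
def e (n : ℕ) : (Fin n → ℕ) → (Fin n → ℤ) := fun u i => (u i : ℤ)

lemma e_inj : Function.Injective (e n) := by
  intro a b h; funext i; exact Nat.cast_injective (congrFun h i)

lemma e_add (a b : Fin n → ℕ) : e n (a + b) = e n a + e n b := by
  funext i; simp [e]

lemma incl_eq (F : TPoly n) : incl n F = AddMonoidAlgebra.ofCoeff (Finsupp.mapDomain (e n) F.coeff) := rfl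

lemma incl_apply_e (F : TPoly n) (u : Fin n → ℕ) : toF (incl n F) (e n u) = toF F u := by
  show (incl n F).coeff (e n u) = _
  rw [incl_eq]
  exact Finsupp.mapDomain_apply e_inj F.coeff u

lemma incl_apply_notin (F : TPoly n) {v : Fin n → ℤ} (hv : v ∉ Set.range (e n)) :
    toF (incl n F) v = 0 := by
  show (incl n F).coeff v = 0
  rw [incl_eq]
  exact Finsupp.mapDomain_notin_range F.coeff v hv

lemma incl_single (u : Fin n → ℕ) (c : T) :
    incl n (AddMonoidAlgebra.single u c) = AddMonoidAlgebra.single (e n u) c := by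
  rw [incl_eq]; exact congrArg AddMonoidAlgebra.ofCoeff (Finsupp.mapDomain_single (f := e n) (a := u) (b := c))

lemma incl_inj : Function.Injective (incl n) := by
  intro a b h
  rw [incl_eq, incl_eq] at h
  exact AddMonoidAlgebra.coeff_injective (Finsupp.mapDomain_injective e_inj (congrArg AddMonoidAlgebra.coeff h))

lemma Tone_ne_zero : (1 : T) ≠ 0 := by
  intro h
  have := congrArg Tropical.untrop h
  simp [Tropical.untrop_one, Tropical.untrop_zero] at this

lemma exists_inv {c : T} (hc : c ≠ 0) : ∃ d : T, c * d = 1 := by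
  obtain ⟨r, hr⟩ : ∃ r : ℝ, Tropical.untrop c = WithTop.some (OrderDual.toDual r) := by
    cases hv : Tropical.untrop c with
    | top => exact absurd (by rw [← Tropical.trop_untrop c, hv]; rfl) hc
    | coe r => exact ⟨r, rfl⟩
  refine ⟨Tropical.trop (WithTop.some (OrderDual.toDual (-r))), ?_⟩
  have h1 : c * Tropical.trop (WithTop.some (OrderDual.toDual (-r)))
      = Tropical.trop (Tropical.untrop c + WithTop.some (OrderDual.toDual (-r))) := rfl
  rw [h1, hr]
  have : (WithTop.some (OrderDual.toDual r) + WithTop.some (OrderDual.toDual (-r)) :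
      WithTop ℝᵒᵈ) = WithTop.some (OrderDual.toDual 0) := by
    rw [← WithTop.coe_add]; norm_num
  rw [this]; rfl

lemma isUnit_single (u : Fin n → ℤ) {c : T} (hc : c ≠ 0) :
    IsUnit (AddMonoidAlgebra.single u c : TLaur n) := by
  obtain ⟨d, hd⟩ := exists_inv hc
  refine IsUnit.of_mul_eq_one (AddMonoidAlgebra.single (-u) d) ?_
  rw [AddMonoidAlgebra.single_mul_single, add_neg_cancel, hd]
  rfl

lemma mem_of_unit_mul {R : Type*} [CommSemiring R] {I : Ideal R} {a x : R}
    (h : IsUnit a) (hx : a * x ∈ I) : x ∈ I := by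
  obtain ⟨u, rfl⟩ := h
  have := I.mul_mem_left (↑u⁻¹) hx
  rwa [← mul_assoc, Units.inv_mul, one_mul] at this

/-- Coefficient of a monomial shift. -/
lemma shift_coeff (w : Fin n → ℕ) (f : TLaur n) (v : Fin n → ℤ) :
    toF (AddMonoidAlgebra.single (e n w) 1 * f) (e n w + v) = toF f v := by
  show (AddMonoidAlgebra.single (e n w) (1:T) * f).coeff (e n w + v) = f.coeff v
  rw [AddMonoidAlgebra.coeff_single_mul_apply, neg_add_cancel_left, one_mul]

lemma shift_coeff' (w : Fin n → ℕ) (f : TLaur n) (v : Fin n → ℤ) :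
    toF (AddMonoidAlgebra.single (-(e n w)) 1 * f) v = toF f (e n w + v) := by
  show (AddMonoidAlgebra.single (-(e n w)) (1:T) * f).coeff v = f.coeff (e n w + v)
  rw [AddMonoidAlgebra.coeff_single_mul_apply, neg_neg, one_mul]

/-- If a Laurent element has support inside the range of `e`, it comes from a polynomial. -/
lemma exists_poly_of_support {g : TLaur n}
    (hg : ∀ v : Fin n → ℤ, v ∉ Set.range (e n) → toF g v = 0) :
    ∃ F : TPoly n, incl n F = g ∧ ∀ u : Fin n → ℕ, toF F u = toF g (e n u) := by
  refine ⟨AddMonoidAlgebra.ofCoeff (Finsupp.comapDomain (e n) g.coeff e_inj.injOn), ?_, ?_⟩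
  · rw [incl_eq]
    refine AddMonoidAlgebra.coeff_injective (Finsupp.mapDomain_comapDomain (e n) e_inj g.coeff ?_)
    intro v hv
    by_contra hvr
    exact (Finsupp.mem_support_iff.mp hv) (hg v hvr)
  · intro u; rfl

/-- Every Laurent polynomial can be cleared into a polynomial by a monomial. -/
lemma exists_clear (f : TLaur n) :
    ∃ (w : Fin n → ℕ) (F : TPoly n),
      AddMonoidAlgebra.single (e n w) 1 * f = incl n F := by
  classical
  set w : Fin n → ℕ := fun i => (toF f).support.sup (fun v => (-(v i)).toNat) with hw
  set g : TLaur n := AddMonoidAlgebra.single (e n w) 1 * f with hgdef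
  have hsupp : ∀ v : Fin n → ℤ, v ∉ Set.range (e n) → toF g v = 0 := by
    intro v hv
    by_contra h0
    have hfv : toF f (-(e n w) + v) ≠ 0 := by
      intro h
      apply h0
      show (AddMonoidAlgebra.single (e n w) (1:T) * f).coeff v = 0
      have h' : f.coeff (-(e n w) + v) = 0 := h
      rw [AddMonoidAlgebra.coeff_single_mul_apply, h', mul_zero]
    have hmem : (-(e n w) + v) ∈ (toF f).support := Finsupp.mem_support_iff.mpr hfv
    apply hv
    have hnn : ∀ i, 0 ≤ v i := by
      intro i
      have h1 : (-( (-(e n w) + v) i)).toNat ≤ w i :=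
        Finset.le_sup (f := fun v => (-(v i)).toNat) hmem
      have h2 : -((-(e n w) + v) i) ≤ ((-( (-(e n w) + v) i)).toNat : ℤ) := Int.self_le_toNat _
      have h3 : ((w i : ℤ)) = e n w i := rfl
      have : -((-(e n w) + v) i) ≤ (w i : ℤ) := le_trans h2 (by exact_mod_cast h1)
      simp only [Pi.add_apply, Pi.neg_apply, neg_add_rev, neg_neg] at this
      omega
    exact ⟨fun i => (v i).toNat, by funext i; simp [e, Int.toNat_of_nonneg (hnn i)]⟩
  obtain ⟨F, hF, -⟩ := exists_poly_of_support hsupp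
  exact ⟨w, F, hF.symm⟩

/-- Description of elements of the pushforward ideal. -/
lemma map_descr {J : Ideal (TPoly n)} {x : TLaur n} (hx : x ∈ Ideal.map (incl n) J) :
    ∃ (w : Fin n → ℕ) (F : TPoly n), F ∈ J ∧
      AddMonoidAlgebra.single (e n w) 1 * x = incl n F := by
  have hone : (AddMonoidAlgebra.single (0 : Fin n → ℤ) (1:T) : TLaur n) = 1 := rfl
  refine Submodule.span_induction ?_ ?_ ?_ ?_ hx
  · rintro y ⟨F, hF, rfl⟩
    refine ⟨0, F, hF, ?_⟩
    have : e n 0 = (0 : Fin n → ℤ) := by funext i; simp [e]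
    rw [this, hone, one_mul]
  · exact ⟨0, 0, J.zero_mem, by simp⟩
  · rintro x y hx' hy' ⟨wx, Fx, hFx, hFxe⟩ ⟨wy, Fy, hFy, hFye⟩
    refine ⟨wx + wy,
      AddMonoidAlgebra.single wy 1 * Fx + AddMonoidAlgebra.single wx 1 * Fy,
      J.add_mem (J.mul_mem_left _ hFx) (J.mul_mem_left _ hFy), ?_⟩
    have hsplit : (AddMonoidAlgebra.single (e n (wx + wy)) (1:T) : TLaur n)
        = AddMonoidAlgebra.single (e n wx) 1 * AddMonoidAlgebra.single (e n wy) 1 := by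
      rw [AddMonoidAlgebra.single_mul_single, one_mul, e_add]
    rw [map_add, map_mul, map_mul, incl_single, incl_single, ← hFxe, ← hFye, hsplit]
    ring
  · rintro r x hx' ⟨w, F, hF, hFe⟩
    obtain ⟨a, R, hR⟩ := exists_clear r
    refine ⟨a + w, R * F, J.mul_mem_left _ hF, ?_⟩
    have hsplit : (AddMonoidAlgebra.single (e n (a + w)) (1:T) : TLaur n)
        = AddMonoidAlgebra.single (e n a) 1 * AddMonoidAlgebra.single (e n w) 1 := by
      rw [AddMonoidAlgebra.single_mul_single, one_mul, e_add]
    have hsmul : r • x = r * x := rfl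
    rw [hsmul, map_mul, ← hR, ← hFe, hsplit]
    ring

/-- Common-denominator version for two elements. -/
lemma map_descr₂ {J : Ideal (TPoly n)} {x y : TLaur n}
    (hx : x ∈ Ideal.map (incl n) J) (hy : y ∈ Ideal.map (incl n) J) :
    ∃ (w : Fin n → ℕ) (F G : TPoly n), F ∈ J ∧ G ∈ J ∧
      AddMonoidAlgebra.single (e n w) 1 * x = incl n F ∧
      AddMonoidAlgebra.single (e n w) 1 * y = incl n G := by
  obtain ⟨wx, Fx, hFx, hFxe⟩ := map_descr hx
  obtain ⟨wy, Fy, hFy, hFye⟩ := map_descr hy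
  have hsplit : ∀ a b : Fin n → ℕ, (AddMonoidAlgebra.single (e n (a + b)) (1:T) : TLaur n)
      = AddMonoidAlgebra.single (e n a) 1 * AddMonoidAlgebra.single (e n b) 1 := by
    intro a b
    rw [AddMonoidAlgebra.single_mul_single, one_mul, e_add]
  refine ⟨wx + wy, AddMonoidAlgebra.single wy 1 * Fx, AddMonoidAlgebra.single wx 1 * Fy,
    J.mul_mem_left _ hFx, J.mul_mem_left _ hFy, ?_, ?_⟩
  · rw [map_mul, incl_single, ← hFxe, hsplit]; ring
  · rw [map_mul, incl_single, ← hFye, hsplit]; ring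

end TropAux

open TropAux in
/-- The maps `I ↦ I ∩ T[x₁,…,x_n]` and `J ↦ J·T[x₁^{±1},…,x_n^{±1}]` are mutually
inverse bijections between the prime tropical ideals of the Laurent polynomial
semiring and the prime tropical ideals of the polynomial semiring containing no
monomial. -/
theorem prime_tropical_ideal_correspondence (n : ℕ) :
    (∀ I : Ideal (TLaur n), I.IsPrime → IsTropicalIdeal (I : Set (TLaur n)) →
      (Ideal.comap (incl n) I).IsPrime ∧
      IsTropicalIdeal ((Ideal.comap (incl n) I : Ideal (TPoly n)) : Set (TPoly n)) ∧
      NoMonomial (Ideal.comap (incl n) I) ∧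
      Ideal.map (incl n) (Ideal.comap (incl n) I) = I) ∧
    (∀ J : Ideal (TPoly n), J.IsPrime → IsTropicalIdeal (J : Set (TPoly n)) →
      NoMonomial J →
      (Ideal.map (incl n) J).IsPrime ∧
      IsTropicalIdeal ((Ideal.map (incl n) J : Ideal (TLaur n)) : Set (TLaur n)) ∧
      Ideal.comap (incl n) (Ideal.map (incl n) J) = J) := by
  constructor
  · -- Laurent side to polynomial side
    intro I hIp hIt
    haveI := hIp
    refine ⟨Ideal.IsPrime.comap (incl n), ?_, ?_, ?_⟩
    · -- tropical ideal
      intro f hf g hg u hfu hfg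
      have hfI : incl n f ∈ I := hf
      have hgI : incl n g ∈ I := hg
      obtain ⟨H, hHI, hHu, hHv⟩ := hIt (incl n f) hfI (incl n g) hgI (e n u)
        (by rwa [incl_apply_e]) (by rw [incl_apply_e, incl_apply_e]; exact hfg)
      have hHsupp : ∀ v : Fin n → ℤ, v ∉ Set.range (e n) → toF H v = 0 := by
        intro v hv
        have hne : v ≠ e n u := fun h => hv (h ▸ ⟨u, rfl⟩)
        have := (hHv v hne).1
        rw [incl_apply_notin f hv, incl_apply_notin g hv, add_zero, add_zero] at this
        simpa using this
      obtain ⟨h₀, hh₀, hh₀c⟩ := exists_poly_of_support hHsupp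
      refine ⟨h₀, show incl n h₀ ∈ I by rw [hh₀]; exact hHI, by rw [hh₀c]; exact hHu, ?_⟩
      intro v hv
      have hvne : e n v ≠ e n u := fun h => hv (e_inj h)
      have := hHv (e n v) hvne
      rw [incl_apply_e, incl_apply_e] at this
      rw [hh₀c]
      exact this
    · -- no monomial
      intro u c hc hmem
      have : incl n (AddMonoidAlgebra.single u c) ∈ I := hmem
      rw [incl_single] at this
      exact hIp.ne_top (I.eq_top_of_isUnit_mem this (isUnit_single _ hc))
    · -- map ∘ comap = id
      refine le_antisymm Ideal.map_comap_le ?_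
      intro f hf
      obtain ⟨w, F, hF⟩ := exists_clear f
      have hFI : incl n F ∈ I := by
        rw [← hF]; exact I.mul_mem_left _ hf
      have hmap : incl n F ∈ Ideal.map (incl n) (Ideal.comap (incl n) I) :=
        Ideal.mem_map_of_mem _ (Ideal.mem_comap.mpr hFI)
      exact mem_of_unit_mul (isUnit_single _ Tone_ne_zero) (hF ▸ hmap)
  · -- polynomial side to Laurent side
    intro J hJp hJt hJm
    have hcm : Ideal.comap (incl n) (Ideal.map (incl n) J) = J := by
      refine le_antisymm ?_ Ideal.le_comap_map
      intro F hF
      obtain ⟨w, H, hH, hHe⟩ := map_descr (Ideal.mem_comap.mp hF)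
      rw [← incl_single, ← map_mul] at hHe
      have : AddMonoidAlgebra.single w (1:T) * F ∈ J := by
        rw [incl_inj hHe]; exact hH
      exact (hJp.mem_or_mem this).resolve_left (hJm w 1 Tone_ne_zero)
    refine ⟨?_, ?_, hcm⟩
    · -- prime
      constructor
      · intro htop
        apply hJp.ne_top
        rw [← hcm, htop, Ideal.comap_top]
      · intro x y hxy
        obtain ⟨wx, Fx, hFx⟩ := exists_clear x
        obtain ⟨wy, Fy, hFy⟩ := exists_clear y
        have hsplit : (AddMonoidAlgebra.single (e n (wx + wy)) (1:T) : TLaur n)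
            = AddMonoidAlgebra.single (e n wx) 1 * AddMonoidAlgebra.single (e n wy) 1 := by
          rw [AddMonoidAlgebra.single_mul_single, one_mul, e_add]
        have hmem : incl n (Fx * Fy) ∈ Ideal.map (incl n) J := by
          rw [map_mul, ← hFx, ← hFy]
          have : AddMonoidAlgebra.single (e n wx) (1:T) * x *
              (AddMonoidAlgebra.single (e n wy) 1 * y)
              = (AddMonoidAlgebra.single (e n wx) 1 * AddMonoidAlgebra.single (e n wy) 1)
                * (x * y) := by ring
          rw [this]
          exact Ideal.mul_mem_left _ _ hxy
        have : Fx * Fy ∈ J := by rw [← hcm]; exact hmem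
        rcases hJp.mem_or_mem this with h | h
        · left
          have : incl n Fx ∈ Ideal.map (incl n) J := Ideal.mem_map_of_mem _ h
          exact mem_of_unit_mul (isUnit_single _ Tone_ne_zero) (hFx ▸ this)
        · right
          have : incl n Fy ∈ Ideal.map (incl n) J := Ideal.mem_map_of_mem _ h
          exact mem_of_unit_mul (isUnit_single _ Tone_ne_zero) (hFy ▸ this)
    · -- tropical ideal
      intro f hf g hg u hfu hfg
      obtain ⟨w, F, G, hF, hG, hFe, hGe⟩ := map_descr₂ hf hg
      have hFc : ∀ v : Fin n → ℤ, toF (incl n F) (e n w + v) = toF f v := by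
        intro v; rw [← hFe]; exact shift_coeff w f v
      have hGc : ∀ v : Fin n → ℤ, toF (incl n G) (e n w + v) = toF g v := by
        intro v; rw [← hGe]; exact shift_coeff w g v
      -- the shifted position of u lies in the range of e
      have hur : e n w + u ∈ Set.range (e n) := by
        by_contra hr
        apply hfu
        rw [← hFc u, incl_apply_notin F hr]
      obtain ⟨p, hp⟩ := hur
      have hFp : toF F p = toF f u := by rw [← incl_apply_e F p, hp]; exact hFc u
      have hGp : toF G p = toF g u := by rw [← incl_apply_e G p, hp]; exact hGc u
      obtain ⟨H, hHJ, hHp, hHv⟩ := hJt F hF G hG p (by rw [hFp]; exact hfu)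
        (by rw [hFp, hGp]; exact hfg)
      refine ⟨AddMonoidAlgebra.single (-(e n w)) 1 * incl n H,
        Ideal.mul_mem_left _ _ (Ideal.mem_map_of_mem _ hHJ), ?_, ?_⟩
      · rw [shift_coeff', ← hp, incl_apply_e]; exact hHp
      · intro v hv
        rw [shift_coeff']
        by_cases hvr : e n w + v ∈ Set.range (e n)
        · obtain ⟨q, hq⟩ := hvr
          have hqp : q ≠ p := by
            intro h
            apply hv
            have : e n w + v = e n w + u := by rw [← hq, h, hp]
            exact add_left_cancel this
          have h1 : toF f v = toF F q := by rw [← hFc v, ← hq, incl_apply_e]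
          have h2 : toF g v = toF G q := by rw [← hGc v, ← hq, incl_apply_e]
          have h3 : toF (incl n H) (e n w + v) = toF H q := by rw [← hq, incl_apply_e]
          rw [h1, h2, h3]
          exact hHv q hqp
        · have h1 : toF f v = 0 := by rw [← hFc v, incl_apply_notin F hvr]
          have h2 : toF g v = 0 := by rw [← hGc v, incl_apply_notin G hvr]
          have h3 : toF (incl n H) (e n w + v) = 0 := incl_apply_notin H hvr
          rw [h1, h2, h3]
          exact ⟨by simp, fun h => absurd rfl h⟩
end
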